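/- arXiv:1510.06449 — 4 statements merged into one kernel-verified Lean document; each statement's English description precedes it below -/
import Mathlib

section
/- Let N ≥ 2, let Ω ⊆ ℝ^N be Lebesgue measurable with |Ω| < ∞, and suppose Ω is contained in a cylinder {x ∈ ℝ^N : x₂² + x₃² + ⋯ + x_N² ≤ C} for some C > 0. Let T > 0 and let D ∈ ℝ be such that for every r > D, limsup_{t→+∞} V_Ω(t)/t^{N+r} = 0 (i.e., D is at least the upper box dimension of Ω at infinity). Then there exists a function F holomorphic on the half-plane {s ∈ ℂ : Re s > D - 2} such that for every s with Re s > D, F(s) = ∫_{{x ∈ Ω : |x| > T}} |x|^{-s-N} dx - ∫_{{x ∈ Ω : |x| > T}} |x|_∞^{-s-N} dx, where |x| is the Euclidean norm and |x|_∞ := max_{1≤i≤N} |x_i| is the sup-norm. In other words, the difference of the Lapidus zeta functions of Ω at infinity computed with the Euclidean and the sup-norm extends holomorphically to {Re s > D - 2}. -/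
open MeasureTheory Filter
open scoped Topology ENNReal

lemma aux_dyadic {u : ℝ} (hu : 1 < u) : ∃ k : ℕ, (2:ℝ)^k < u ∧ u ≤ 2^(k+1) := by
  have h2 : (1:ℝ) < 2 := one_lt_two
  obtain ⟨n, hn⟩ := pow_unbounded_of_one_lt u h2
  have hP : ∃ m : ℕ, u ≤ (2:ℝ)^(m+1) :=
    ⟨n, hn.le.trans (pow_le_pow_right₀ h2.le (Nat.le_succ n))⟩
  classical
  refine ⟨Nat.find hP, ?_, Nat.find_spec hP⟩
  rcases Nat.eq_zero_or_pos (Nat.find hP) with h0 | hpos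
  · rw [h0]; simpa using hu
  · obtain ⟨m, hm⟩ := Nat.exists_eq_succ_of_ne_zero hpos.ne'
    have := Nat.find_min hP (by omega : m < Nat.find hP)
    push_neg at this
    calc (2:ℝ)^(Nat.find hP) = 2^(m+1) := by rw [hm]
    _ < u := this


lemma aux_cpow_diff {a b Cc : ℝ} (ha : 0 < a) (hab : a ≤ b) (hC : b^2 - a^2 ≤ Cc) (w : ℂ) :
    ‖(b:ℂ)^w - (a:ℂ)^w‖ ≤ ‖w‖ * (a^(w.re-1) + b^(w.re-1)) * (Cc/b) := by
  have hb : 0 < b := ha.trans_le hab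
  rcases eq_or_ne w 0 with rfl | hw
  · simp
  have hderiv : ∀ t ∈ Set.uIcc a b,
      HasDerivAt (fun y : ℝ => (y:ℂ)^w) (w * (t:ℂ)^(w-1)) t := by
    intro t ht
    rw [Set.uIcc_of_le hab] at ht
    have ht0 : (0:ℝ) < t := ha.trans_le ht.1
    have h1 : HasDerivAt (fun y : ℝ => (y:ℂ)^((w-1)+1)/((w-1)+1)) ((t:ℂ)^(w-1)) t :=
      hasDerivAt_ofReal_cpow_const' ht0.ne' (by simpa using hw)
    have h2 := h1.const_mul w
    simp only [sub_add_cancel] at h2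
    have e : (fun y : ℝ => w * ((y:ℂ)^w / w)) = fun y : ℝ => (y:ℂ)^w := by
      funext y; field_simp
    rw [e] at h2; exact h2
  have hcont : IntervalIntegrable (fun t : ℝ => w * (t:ℂ)^(w-1)) volume a b := by
    apply ContinuousOn.intervalIntegrable
    apply continuousOn_const.mul
    intro t ht
    rw [Set.uIcc_of_le hab] at ht
    exact (Complex.continuousAt_ofReal_cpow_const t (w-1)
      (Or.inr (ha.trans_le ht.1).ne')).continuousWithinAt
  have hFTC : (∫ t in a..b, w * (t:ℂ)^(w-1)) = (b:ℂ)^w - (a:ℂ)^w :=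
    intervalIntegral.integral_eq_sub_of_hasDerivAt hderiv hcont
  rw [← hFTC]
  have hbd : ∀ t ∈ Set.uIoc a b,
      ‖w * (t:ℂ)^(w-1)‖ ≤ ‖w‖ * (a^(w.re-1) + b^(w.re-1)) := by
    intro t ht
    rw [Set.uIoc_of_le hab] at ht
    have ht0 : (0:ℝ) < t := ha.trans ht.1
    have hnorm : ‖(t:ℂ)^(w-1)‖ = t^(w.re - 1) := by
      rw [Complex.norm_cpow_eq_rpow_re_of_pos ht0]
      norm_num
    rw [norm_mul, hnorm]
    apply mul_le_mul_of_nonneg_left _ (norm_nonneg w)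
    rcases le_or_gt 0 (w.re - 1) with hp | hp
    · have h1 : t^(w.re-1) ≤ b^(w.re-1) := Real.rpow_le_rpow ht0.le ht.2 hp
      have h2 : (0:ℝ) ≤ a^(w.re-1) := by positivity
      linarith
    · have h1 : t^(w.re-1) ≤ a^(w.re-1) := Real.rpow_le_rpow_of_nonpos ha ht.1.le hp.le
      have h2 : (0:ℝ) ≤ b^(w.re-1) := by positivity
      linarith
  have habs : |b - a| ≤ Cc / b := by
    rw [abs_of_nonneg (sub_nonneg.2 hab), le_div_iff₀ hb]
    nlinarith [mul_nonneg ha.le (sub_nonneg.2 hab)]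
  calc ‖∫ t in a..b, w * (t:ℂ)^(w-1)‖
      ≤ (‖w‖ * (a^(w.re-1) + b^(w.re-1))) * |b - a| :=
        intervalIntegral.norm_integral_le_of_norm_le_const hbd
    _ ≤ ‖w‖ * (a^(w.re-1) + b^(w.re-1)) * (Cc/b) := by
        apply mul_le_mul_of_nonneg_left habs
        positivity

lemma aux_int {N : ℕ} {Ω : Set (EuclideanSpace ℝ (Fin N))}
    (hΩ : MeasurableSet Ω) (hfin : volume Ω < ⊤) {T : ℝ} (hT : 0 < T)
    {r q : ℝ} (hrq : r < q)
    (hV : ∀ᶠ t : ℝ in atTop, volume {x ∈ Ω | t < ‖x‖} ≤ ENNReal.ofReal (t ^ ((N:ℝ) + r))) :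
    IntegrableOn (fun x => ‖x‖ ^ (-q - (N:ℝ))) {x ∈ Ω | T < ‖x‖} volume := by
  set p := -q - (N:ℝ) with hp
  obtain ⟨t₀, ht₀⟩ := eventually_atTop.mp hV
  set t₁ := max t₀ (max T 1) with ht₁def
  have ht₁1 : (1:ℝ) ≤ t₁ := le_max_of_le_right (le_max_right _ _)
  have ht₁0 : (0:ℝ) < t₁ := lt_of_lt_of_le one_pos ht₁1
  have ht₁T : T ≤ t₁ := le_max_of_le_right (le_max_left _ _)
  have ht₁t₀ : t₀ ≤ t₁ := le_max_left _ _
  have hSmeas : MeasurableSet {x ∈ Ω | T < ‖x‖} :=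
    hΩ.inter (measurableSet_lt measurable_const measurable_norm)
  constructor
  · apply ContinuousOn.aestronglyMeasurable _ hSmeas
    intro x hx
    have hx0 : ‖x‖ ≠ 0 := (hT.trans hx.2).ne'
    exact ((Real.continuousAt_rpow_const _ p (Or.inl hx0)).comp
      continuous_norm.continuousAt).continuousWithinAt
  · rw [hasFiniteIntegral_iff_ofReal
      (ae_of_all _ fun x => Real.rpow_nonneg (norm_nonneg x) p)]
    set A : ℕ → Set (EuclideanSpace ℝ (Fin N)) :=
      fun k => {x | x ∈ Ω ∧ t₁ * 2^k < ‖x‖ ∧ ‖x‖ ≤ t₁ * 2^(k+1)} with hA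
    have hAmeas : ∀ k, MeasurableSet (A k) := fun k =>
      hΩ.inter ((measurableSet_lt measurable_const measurable_norm).inter
        (measurableSet_le measurable_norm measurable_const))
    have hcover : {x ∈ Ω | T < ‖x‖} ⊆
        ({x ∈ Ω | T < ‖x‖} ∩ {x | ‖x‖ ≤ t₁}) ∪ ⋃ k, A k := by
      intro x hx
      by_cases hle : ‖x‖ ≤ t₁
      · exact Or.inl ⟨hx, hle⟩
      · push_neg at hle
        have hu : 1 < ‖x‖ / t₁ := (one_lt_div ht₁0).2 hle
        obtain ⟨k, hk1, hk2⟩ := aux_dyadic hu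
        refine Or.inr (Set.mem_iUnion.2 ⟨k, hx.1, ?_, ?_⟩)
        · have := (lt_div_iff₀ ht₁0).1 hk1
          linarith [this]
        · have := (div_le_iff₀ ht₁0).1 hk2
          linarith [this]
    have h1 : ∫⁻ x in {x ∈ Ω | T < ‖x‖} ∩ {x | ‖x‖ ≤ t₁}, ENNReal.ofReal (‖x‖^p)
        ≤ ENNReal.ofReal (T^p + t₁^p) * volume Ω := by
      have hb : ∀ x ∈ {x ∈ Ω | T < ‖x‖} ∩ {x | ‖x‖ ≤ t₁},
          ENNReal.ofReal (‖x‖^p) ≤ ENNReal.ofReal (T^p + t₁^p) := by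
        intro x hx
        apply ENNReal.ofReal_le_ofReal
        rcases le_or_gt 0 p with hsgn | hsgn
        · have h1 : ‖x‖^p ≤ t₁^p := Real.rpow_le_rpow (norm_nonneg _) hx.2 hsgn
          have h2 : (0:ℝ) ≤ T^p := by positivity
          linarith
        · have h1 : ‖x‖^p ≤ T^p :=
            Real.rpow_le_rpow_of_nonpos hT hx.1.2.le hsgn.le
          have h2 : (0:ℝ) ≤ t₁^p := by positivity
          linarith
      calc ∫⁻ x in {x ∈ Ω | T < ‖x‖} ∩ {x | ‖x‖ ≤ t₁}, ENNReal.ofReal (‖x‖^p)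
          ≤ ∫⁻ _ in {x ∈ Ω | T < ‖x‖} ∩ {x | ‖x‖ ≤ t₁},
            ENNReal.ofReal (T^p + t₁^p) :=
            setLIntegral_mono' (hSmeas.inter (measurableSet_le measurable_norm measurable_const)) hb
        _ = ENNReal.ofReal (T^p + t₁^p) * volume ({x ∈ Ω | T < ‖x‖} ∩ {x | ‖x‖ ≤ t₁}) :=
            setLIntegral_const _ _
        _ ≤ ENNReal.ofReal (T^p + t₁^p) * volume Ω := by
            apply mul_le_mul_right
            exact measure_mono fun x hx => hx.1.1
    have h2 : ∀ k : ℕ, ∫⁻ x in A k, ENNReal.ofReal (‖x‖^p)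
        ≤ ENNReal.ofReal ((1 + 2^p) * t₁^(r-q)) * (ENNReal.ofReal (2^(r-q)))^k := by
      intro k
      have hbase : (0:ℝ) < t₁ * 2^k := by positivity
      have hb : ∀ x ∈ A k, ENNReal.ofReal (‖x‖^p)
          ≤ ENNReal.ofReal ((t₁*2^k)^p * (1 + 2^p)) := by
        intro x hx
        apply ENNReal.ofReal_le_ofReal
        have key : ‖x‖^p ≤ (t₁*2^k)^p + (t₁*2^(k+1))^p := by
          rcases le_or_gt 0 p with hsgn | hsgn
          · have h1 : ‖x‖^p ≤ (t₁*2^(k+1))^p :=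
              Real.rpow_le_rpow (norm_nonneg _) hx.2.2 hsgn
            have h2 : (0:ℝ) ≤ (t₁*2^k)^p := by positivity
            linarith
          · have h1 : ‖x‖^p ≤ (t₁*2^k)^p :=
              Real.rpow_le_rpow_of_nonpos hbase hx.2.1.le hsgn.le
            have h2 : (0:ℝ) ≤ (t₁*2^(k+1))^p := by positivity
            linarith
        have hsplit : (t₁*2^(k+1))^p = (t₁*2^k)^p * 2^p := by
          rw [pow_succ, ← mul_assoc, Real.mul_rpow hbase.le (by norm_num)]
        calc ‖x‖^p ≤ (t₁*2^k)^p + (t₁*2^(k+1))^p := key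
          _ = (t₁*2^k)^p * (1 + 2^p) := by rw [hsplit]; ring
      have hmeasA : volume (A k) ≤ ENNReal.ofReal ((t₁*2^k)^((N:ℝ)+r)) := by
        have hsub : A k ⊆ {x ∈ Ω | t₁*2^k < ‖x‖} := fun x hx => ⟨hx.1, hx.2.1⟩
        refine (measure_mono hsub).trans (ht₀ _ ?_)
        calc t₀ ≤ t₁ := ht₁t₀
          _ ≤ t₁ * 2^k := le_mul_of_one_le_right ht₁0.le (one_le_pow₀ one_le_two)
      calc ∫⁻ x in A k, ENNReal.ofReal (‖x‖^p)
          ≤ ∫⁻ _ in A k, ENNReal.ofReal ((t₁*2^k)^p * (1 + 2^p)) :=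
            setLIntegral_mono' (hAmeas k) hb
        _ = ENNReal.ofReal ((t₁*2^k)^p * (1 + 2^p)) * volume (A k) := setLIntegral_const _ _
        _ ≤ ENNReal.ofReal ((t₁*2^k)^p * (1 + 2^p)) * ENNReal.ofReal ((t₁*2^k)^((N:ℝ)+r)) :=
            mul_le_mul_right hmeasA _
        _ = ENNReal.ofReal ((t₁*2^k)^p * (1 + 2^p) * (t₁*2^k)^((N:ℝ)+r)) := by
            rw [← ENNReal.ofReal_mul (by positivity)]
        _ = ENNReal.ofReal ((1 + 2^p) * t₁^(r-q)) * (ENNReal.ofReal (2^(r-q)))^k := by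
            have e1 : (t₁*2^k)^p * (1 + 2^p) * (t₁*2^k)^((N:ℝ)+r)
                = (1 + 2^p) * (t₁^(r-q) * ((2:ℝ)^(r-q))^k) := by
              have e2 : (t₁*2^k)^p * (t₁*2^k)^((N:ℝ)+r) = (t₁*2^k)^(r-q) := by
                rw [← Real.rpow_add hbase]
                congr 1
                rw [hp]; ring
              have e3 : (t₁*(2:ℝ)^k)^(r-q) = t₁^(r-q) * ((2:ℝ)^(r-q))^k := by
                rw [Real.mul_rpow ht₁0.le (by positivity)]
                congr 1
                rw [← Real.rpow_natCast ((2:ℝ)^(r-q)) k, ← Real.rpow_natCast (2:ℝ) k,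
                  ← Real.rpow_mul (by norm_num), ← Real.rpow_mul (by norm_num), mul_comm]
              calc (t₁*2^k)^p * (1 + 2^p) * (t₁*2^k)^((N:ℝ)+r)
                  = (1 + 2^p) * ((t₁*2^k)^p * (t₁*2^k)^((N:ℝ)+r)) := by ring
                _ = (1 + 2^p) * (t₁^(r-q) * ((2:ℝ)^(r-q))^k) := by rw [e2, e3]
            rw [e1, ← ENNReal.ofReal_pow (by positivity), ← ENNReal.ofReal_mul (by positivity),
              mul_assoc]
    have hgeo : ENNReal.ofReal ((2:ℝ)^(r-q)) < 1 := by
      rw [← ENNReal.ofReal_one]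
      apply ENNReal.ofReal_lt_ofReal_iff_of_nonneg (by positivity) |>.2
      exact Real.rpow_lt_one_of_one_lt_of_neg one_lt_two (by linarith)
    calc ∫⁻ x in {x ∈ Ω | T < ‖x‖}, ENNReal.ofReal (‖x‖^p)
        ≤ ∫⁻ x in ({x ∈ Ω | T < ‖x‖} ∩ {x | ‖x‖ ≤ t₁}) ∪ ⋃ k, A k, ENNReal.ofReal (‖x‖^p) :=
          lintegral_mono_set hcover
      _ ≤ (∫⁻ x in {x ∈ Ω | T < ‖x‖} ∩ {x | ‖x‖ ≤ t₁}, ENNReal.ofReal (‖x‖^p))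
          + ∫⁻ x in ⋃ k, A k, ENNReal.ofReal (‖x‖^p) := lintegral_union_le _ _ _
      _ ≤ ENNReal.ofReal (T^p + t₁^p) * volume Ω
          + ∑' k, ∫⁻ x in A k, ENNReal.ofReal (‖x‖^p) :=
          add_le_add h1 (lintegral_iUnion_le _ _)
      _ ≤ ENNReal.ofReal (T^p + t₁^p) * volume Ω
          + ∑' k, ENNReal.ofReal ((1 + 2^p) * t₁^(r-q)) * (ENNReal.ofReal (2^(r-q)))^k :=
          add_le_add_right (ENNReal.tsum_le_tsum h2) _
      _ = ENNReal.ofReal (T^p + t₁^p) * volume Ω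
          + ENNReal.ofReal ((1 + 2^p) * t₁^(r-q)) * (1 - ENNReal.ofReal (2^(r-q)))⁻¹ := by
          rw [ENNReal.tsum_mul_left, ENNReal.tsum_geometric]
      _ < ⊤ := by
          apply ENNReal.add_lt_top.2
          exact ⟨ENNReal.mul_lt_top ENNReal.ofReal_lt_top hfin,
            ENNReal.mul_lt_top ENNReal.ofReal_lt_top
              (ENNReal.inv_lt_top.2 (tsub_pos_of_lt hgeo))⟩

set_option maxHeartbeats 3000000 in
/-- Let `N ≥ 2` and let `Ω ⊆ ℝ^N` be measurable of finite measure, contained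
in a cylinder `x₂² + ⋯ + x_N² ≤ C`. Let `T > 0` and `D ∈ ℝ` be such that
`limsup_{t→∞} V_Ω(t)/t^{N+r} = 0` for all `r > D`. Then there is a function `F` holomorphic
on `{Re s > D-2}` which, for `Re s > D`, equals the difference of the Lapidus zeta
functions of `Ω` at infinity computed with the Euclidean norm `|x|` and with the sup-norm
`|x|_∞ = max_i |x_i|`. -/
theorem stmt_16 (N : ℕ) (hN : 2 ≤ N)
    (Ω : Set (EuclideanSpace ℝ (Fin N)))
    (hΩ : MeasurableSet Ω) (hfin : volume Ω < ⊤)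
    (C : ℝ) (hC : 0 < C)
    (hcyl : ∀ x ∈ Ω, ∑ i ∈ Finset.univ.erase (⟨0, by omega⟩ : Fin N), (x i) ^ 2 ≤ C)
    (T : ℝ) (hT : 0 < T) (D : ℝ)
    (hD : ∀ r : ℝ, D < r →
      limsup (fun t : ℝ =>
        volume {x ∈ Ω | t < ‖x‖} / ENNReal.ofReal (t ^ ((N : ℝ) + r))) atTop = 0) :
    ∃ F : ℂ → ℂ,
      DifferentiableOn ℂ F {s : ℂ | D - 2 < s.re} ∧
      ∀ s : ℂ, D < s.re →
        F s = (∫ x in {x ∈ Ω | T < ‖x‖}, (‖x‖ : ℂ) ^ (-s - (N : ℂ))) -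
          ∫ x in {x ∈ Ω | T < ‖x‖}, ((⨆ i : Fin N, |x i| : ℝ) : ℂ) ^ (-s - (N : ℂ)) := by
  classical
  set i0 : Fin N := ⟨0, by omega⟩ with hi0
  haveI : Nonempty (Fin N) := ⟨i0⟩
  set g : EuclideanSpace ℝ (Fin N) → ℝ := fun x => ⨆ i : Fin N, |x i| with hgdef
  set S : Set (EuclideanSpace ℝ (Fin N)) := {x ∈ Ω | T < ‖x‖} with hSdef
  have hSmeas : MeasurableSet S :=
    hΩ.inter (measurableSet_lt measurable_const measurable_norm)
  have hSx : ∀ x ∈ S, x ∈ Ω ∧ T < ‖x‖ := fun x hx => hx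
  have hsqN : (1:ℝ) ≤ Real.sqrt N := by
    rw [Real.one_le_sqrt]
    exact_mod_cast Nat.one_le_of_lt hN
  have hsqN0 : (0:ℝ) < Real.sqrt N := lt_of_lt_of_le one_pos hsqN
  -- continuity of the sup function
  have hg_cont : Continuous g := by
    have hrw : g = fun x => Finset.univ.sup' Finset.univ_nonempty (fun i => |x i|) := by
      funext x
      rw [Finset.sup'_univ_eq_ciSup]
    rw [hrw]
    exact Continuous.finset_sup'_apply Finset.univ_nonempty
      (fun i _ => continuous_abs.comp (EuclideanSpace.proj i).continuous)
  -- pointwise facts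
  have hfacts : ∀ x ∈ S, 0 < g x ∧ g x ≤ ‖x‖ ∧ ‖x‖ ≤ Real.sqrt N * g x ∧
      ‖x‖^2 - (g x)^2 ≤ C := by
    intro x hx
    have hb0 : 0 < ‖x‖ := hT.trans hx.2
    have hnorm2 : ‖x‖^2 = ∑ i, x i ^ 2 := by
      rw [EuclideanSpace.norm_eq, Real.sq_sqrt (Finset.sum_nonneg fun i _ => sq_nonneg _)]
      simp [Real.norm_eq_abs, sq_abs]
    have hbdd : BddAbove (Set.range fun i => |x i|) := (Set.finite_range _).bddAbove
    have hile : ∀ i, |x i| ≤ g x := fun i => le_ciSup hbdd i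
    have hgle : g x ≤ ‖x‖ := by
      apply ciSup_le
      intro i
      have h1 : x i ^2 ≤ ‖x‖^2 := by
        rw [hnorm2]
        exact Finset.single_le_sum (f := fun i => x i ^2) (fun j _ => sq_nonneg _)
          (Finset.mem_univ i)
      nlinarith [sq_abs (x i), abs_nonneg (x i), norm_nonneg x]
    have hsq : ‖x‖^2 ≤ N * (g x)^2 := by
      have hterm : ∀ i ∈ Finset.univ, x i ^2 ≤ (g x)^2 := by
        intro i _
        nlinarith [hile i, sq_abs (x i), abs_nonneg (x i)]
      calc ‖x‖^2 = ∑ i, x i ^2 := hnorm2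
        _ ≤ ∑ _i : Fin N, (g x)^2 := Finset.sum_le_sum hterm
        _ = N * (g x)^2 := by
            simp [Finset.sum_const, Finset.card_univ, nsmul_eq_mul]
    have hg0 : 0 < g x := by
      have hg0' : 0 ≤ g x := (abs_nonneg (x i0)).trans (hile i0)
      rcases hg0'.lt_or_eq with h | h
      · exact h
      · exfalso
        rw [← h] at hsq
        nlinarith
    have hle2 : ‖x‖ ≤ Real.sqrt N * g x := by
      have h1 : ‖x‖^2 ≤ (Real.sqrt N * g x)^2 := by
        rw [mul_pow, Real.sq_sqrt (Nat.cast_nonneg N)]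
        exact hsq
      nlinarith [norm_nonneg x, Real.sqrt_nonneg (N:ℝ), mul_pos hsqN0 hg0]
    have hC2 : ‖x‖^2 - (g x)^2 ≤ C := by
      have h0 : x i0 ^ 2 + ∑ i ∈ Finset.univ.erase i0, x i ^ 2 = ∑ i, x i ^ 2 := by
        exact Finset.add_sum_erase Finset.univ (fun i => x i ^ 2) (Finset.mem_univ i0)
      have h1 : x i0 ^2 ≤ (g x)^2 := by
        nlinarith [hile i0, sq_abs (x i0), abs_nonneg (x i0)]
      have h2 := hcyl x hx.1
      nlinarith [hnorm2]
    exact ⟨hg0, hgle, hle2, hC2⟩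
  -- comparison of powers of g and the norm
  have hsqrt_gen : ∀ x ∈ S, ∀ p : ℝ, (g x)^p ≤ Real.sqrt N^|p| * ‖x‖^p := by
    intro x hx p
    obtain ⟨hg0, hgle, hles, -⟩ := hfacts x hx
    have hb0 : 0 < ‖x‖ := hT.trans hx.2
    rcases le_or_gt 0 p with hp | hp
    · rw [abs_of_nonneg hp]
      calc (g x)^p ≤ ‖x‖^p := Real.rpow_le_rpow hg0.le hgle hp
        _ ≤ Real.sqrt N^p * ‖x‖^p := by
            apply le_mul_of_one_le_left (by positivity)
            calc (1:ℝ) = Real.sqrt N^(0:ℝ) := (Real.rpow_zero _).symm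
              _ ≤ Real.sqrt N^p := Real.rpow_le_rpow_of_exponent_le hsqN hp
    · rw [abs_of_neg hp]
      have hdiv : ‖x‖ / Real.sqrt N ≤ g x := by
        rw [div_le_iff₀ hsqN0]
        linarith [hles]
      have hdivpos : 0 < ‖x‖ / Real.sqrt N := by positivity
      calc (g x)^p ≤ (‖x‖ / Real.sqrt N)^p :=
            Real.rpow_le_rpow_of_nonpos hdivpos hdiv hp.le
        _ = Real.sqrt N^(-p) * ‖x‖^p := by
            rw [Real.div_rpow (norm_nonneg _) (Real.sqrt_nonneg _), div_eq_mul_inv,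
              ← Real.rpow_neg (Real.sqrt_nonneg _), mul_comm]
  -- the volume tail estimate
  have hVev : ∀ r : ℝ, D < r → ∀ᶠ t : ℝ in atTop,
      volume {x ∈ Ω | t < ‖x‖} ≤ ENNReal.ofReal (t ^ ((N:ℝ) + r)) := by
    intro r hr
    have h1 : ∀ᶠ t : ℝ in atTop,
        volume {x ∈ Ω | t < ‖x‖} / ENNReal.ofReal (t ^ ((N:ℝ)+r)) < 1 := by
      apply eventually_lt_of_limsup_lt
      · rw [hD r hr]
        exact zero_lt_one
      · isBoundedDefault
    filter_upwards [h1, eventually_gt_atTop (0:ℝ)] with t ht htpos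
    have hden : ENNReal.ofReal (t ^ ((N:ℝ)+r)) ≠ 0 := by
      rw [Ne, ENNReal.ofReal_eq_zero, not_le]
      positivity
    have := (ENNReal.div_lt_iff (Or.inl hden) (Or.inl ENNReal.ofReal_ne_top)).1 ht
    simpa using this.le
  -- the main integrability lemma
  have hint : ∀ q : ℝ, D < q →
      IntegrableOn (fun x => ‖x‖ ^ (-q - (N:ℝ))) S volume := by
    intro q hq
    have hr : D < (D+q)/2 := by linarith
    exact aux_int hΩ hfin hT (by linarith : (D+q)/2 < q) (hVev _ hr)
  -- integrability with a logarithmic factor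
  have hlogint : ∀ q : ℝ, D < q →
      IntegrableOn (fun x => (1 + |Real.log ‖x‖|) * ‖x‖ ^ (-q - (N:ℝ))) S volume := by
    intro q hq
    set δ := (q - D)/2 with hδdef
    have hδ : 0 < δ := by simp only [hδdef]; linarith
    have hq' : D < q - δ := by simp only [hδdef]; linarith
    apply Integrable.mono'
      (g := fun x => (1 + |Real.log T|) * ‖x‖ ^ (-q - (N:ℝ)) + (1/δ) * ‖x‖ ^ (-(q-δ) - (N:ℝ)))
      (((hint q hq).const_mul _).add ((hint (q-δ) hq').const_mul _))
    · apply ContinuousOn.aestronglyMeasurable _ hSmeas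
      intro x hx
      have hx0 : ‖x‖ ≠ 0 := (hT.trans hx.2).ne'
      apply ContinuousWithinAt.mul
      · apply ContinuousWithinAt.add continuousWithinAt_const
        exact ((continuous_abs.continuousAt).comp
          ((Real.continuousAt_log hx0).comp continuous_norm.continuousAt)).continuousWithinAt
      · exact ((Real.continuousAt_rpow_const _ _ (Or.inl hx0)).comp
          continuous_norm.continuousAt).continuousWithinAt
    · filter_upwards [ae_restrict_mem hSmeas] with x hx
      have hbT : T < ‖x‖ := hx.2
      have hb0 : 0 < ‖x‖ := hT.trans hbT
      have hrpow_pos : (0:ℝ) ≤ ‖x‖ ^ (-q - (N:ℝ)) := by positivity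
      have hnn : (0:ℝ) ≤ (1 + |Real.log ‖x‖|) * ‖x‖ ^ (-q - (N:ℝ)) := by positivity
      rw [Real.norm_eq_abs, abs_of_nonneg hnn]
      rcases le_or_gt 1 ‖x‖ with hone | hone
      · have hlogb : Real.log ‖x‖ ≤ ‖x‖^δ / δ := by
          rw [le_div_iff₀ hδ]
          have h2 : Real.log (‖x‖^δ) ≤ ‖x‖^δ - 1 :=
            Real.log_le_sub_one_of_pos (by positivity)
          rw [Real.log_rpow hb0] at h2
          linarith
        have habs : |Real.log ‖x‖| = Real.log ‖x‖ := abs_of_nonneg (Real.log_nonneg hone)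
        have hcomb : ‖x‖^δ * ‖x‖^(-q - (N:ℝ)) = ‖x‖^(-(q-δ) - (N:ℝ)) := by
          rw [← Real.rpow_add hb0]
          congr 1
          ring
        calc (1 + |Real.log ‖x‖|) * ‖x‖ ^ (-q - (N:ℝ))
            = ‖x‖^(-q-(N:ℝ)) + Real.log ‖x‖ * ‖x‖^(-q-(N:ℝ)) := by rw [habs]; ring
          _ ≤ (1 + |Real.log T|) * ‖x‖^(-q-(N:ℝ)) + (1/δ) * ‖x‖^(-(q-δ)-(N:ℝ)) := by
              apply add_le_add
              · exact le_mul_of_one_le_left hrpow_pos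
                  (by linarith [abs_nonneg (Real.log T)])
              · calc Real.log ‖x‖ * ‖x‖^(-q-(N:ℝ))
                    ≤ (‖x‖^δ/δ) * ‖x‖^(-q-(N:ℝ)) :=
                      mul_le_mul_of_nonneg_right hlogb hrpow_pos
                  _ = (1/δ) * (‖x‖^δ * ‖x‖^(-q-(N:ℝ))) := by ring
                  _ = (1/δ) * ‖x‖^(-(q-δ)-(N:ℝ)) := by rw [hcomb]
      · have hlog : |Real.log ‖x‖| ≤ |Real.log T| := by
          have h1 : Real.log ‖x‖ < 0 := Real.log_neg hb0 hone
          have h2 : Real.log T ≤ Real.log ‖x‖ := Real.log_le_log hT hbT.le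
          rw [abs_of_neg h1, abs_of_neg (lt_of_le_of_lt h2 h1)]
          linarith
        have hterm2 : (0:ℝ) ≤ (1/δ) * ‖x‖ ^ (-(q-δ) - (N:ℝ)) := by positivity
        calc (1 + |Real.log ‖x‖|) * ‖x‖ ^ (-q - (N:ℝ))
            ≤ (1 + |Real.log T|) * ‖x‖ ^ (-q - (N:ℝ)) := by
              apply mul_le_mul_of_nonneg_right _ hrpow_pos
              linarith
          _ ≤ _ := le_add_of_nonneg_right hterm2
  -- measurability helpers
  have hwre : ∀ s : ℂ, (-s - (N:ℂ)).re = -s.re - (N:ℝ) := fun s => by simp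
  have haesm_b : ∀ w : ℂ, AEStronglyMeasurable
      (fun x => ((‖x‖:ℝ):ℂ)^w) (volume.restrict S) := by
    intro w
    apply ContinuousOn.aestronglyMeasurable _ hSmeas
    intro x hx
    have hb0 : ‖x‖ ≠ 0 := (hT.trans hx.2).ne'
    exact ((Complex.continuousAt_ofReal_cpow_const _ _ (Or.inr hb0)).comp
      continuous_norm.continuousAt).continuousWithinAt
  have haesm_a : ∀ w : ℂ, AEStronglyMeasurable
      (fun x => ((g x :ℝ):ℂ)^w) (volume.restrict S) := by
    intro w
    apply ContinuousOn.aestronglyMeasurable _ hSmeas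
    intro x hx
    have hg0 : g x ≠ 0 := (hfacts x hx).1.ne'
    exact ((Complex.continuousAt_ofReal_cpow_const _ _ (Or.inr hg0)).comp
      hg_cont.continuousAt).continuousWithinAt
  have haesm : ∀ w : ℂ, AEStronglyMeasurable
      (fun x => ((‖x‖:ℝ):ℂ)^w - ((g x :ℝ):ℂ)^w) (volume.restrict S) :=
    fun w => (haesm_b w).sub (haesm_a w)
  refine ⟨fun s => ∫ x in S, (((‖x‖:ℝ):ℂ)^(-s-(N:ℂ)) - ((g x :ℝ):ℂ)^(-s-(N:ℂ))), ?_, ?_⟩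
  · -- differentiability
    intro s₀ hs₀
    rw [Set.mem_setOf_eq] at hs₀
    set ε := (s₀.re - (D-2))/2 with hεdef
    have hε : 0 < ε := by rw [hεdef]; linarith
    set q₁ := s₀.re - ε + 2 with hq₁def
    set q₂ := s₀.re + ε + 2 with hq₂def
    have hq₁D : D < q₁ := by rw [hq₁def, hεdef]; linarith
    have hq₂D : D < q₂ := by rw [hq₂def]; linarith
    set R := ‖s₀‖ + ε + N with hRdef
    have hR0 : 0 ≤ R := by
      rw [hRdef]
      positivity
    set g₀ : EuclideanSpace ℝ (Fin N) → ℝ :=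
      fun x => ‖x‖^(-q₁ - (N:ℝ)) + ‖x‖^(-q₂ - (N:ℝ)) with hg₀def
    have hg₀int : IntegrableOn g₀ S volume := (hint q₁ hq₁D).add (hint q₂ hq₂D)
    have hg₀nn : ∀ x, 0 ≤ g₀ x := fun x => by
      rw [hg₀def]
      positivity
    have hballre : ∀ s ∈ Metric.ball s₀ ε,
        |s.re - s₀.re| < ε ∧ ‖s‖ ≤ ‖s₀‖ + ε := by
      intro s hs
      rw [Metric.mem_ball, Complex.dist_eq] at hs
      constructor
      · have h := Complex.abs_re_le_norm (s - s₀)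
        rw [Complex.sub_re] at h
        calc |s.re - s₀.re| ≤ ‖s - s₀‖ := h
          _ < ε := hs
      · have h := norm_sub_norm_le s s₀
        linarith
    have habsw : ∀ s ∈ Metric.ball s₀ ε, ‖-s - (N:ℂ)‖ ≤ R := by
      intro s hs
      obtain ⟨-, h2⟩ := hballre s hs
      have h3 : ‖-s - (N:ℂ)‖ ≤ ‖s‖ + ‖(N:ℂ)‖ := by
        calc ‖-s - (N:ℂ)‖ = ‖-(s + (N:ℂ))‖ := by ring_nf
          _ = ‖s + (N:ℂ)‖ := norm_neg _
          _ ≤ _ := norm_add_le _ _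
      rw [Complex.norm_natCast] at h3
      rw [hRdef]
      linarith
    have hexp_range : ∀ s ∈ Metric.ball s₀ ε, ∀ x ∈ S,
        ‖x‖^((-s-(N:ℂ)).re - 2) ≤ g₀ x := by
      intro s hs x hx
      have hb0 : 0 < ‖x‖ := hT.trans hx.2
      obtain ⟨h1, -⟩ := hballre s hs
      rw [abs_lt] at h1
      rw [hwre]
      rcases le_or_gt 1 ‖x‖ with hone | hone
      · have he : -s.re - (N:ℝ) - 2 ≤ -q₁ - (N:ℝ) := by rw [hq₁def]; linarith
        calc ‖x‖^(-s.re - (N:ℝ) - 2) ≤ ‖x‖^(-q₁ - (N:ℝ)) :=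
              Real.rpow_le_rpow_of_exponent_le hone he
          _ ≤ g₀ x := by rw [hg₀def]; exact le_add_of_nonneg_right (by positivity)
      · have he : -q₂ - (N:ℝ) ≤ -s.re - (N:ℝ) - 2 := by rw [hq₂def]; linarith
        calc ‖x‖^(-s.re - (N:ℝ) - 2) ≤ ‖x‖^(-q₂ - (N:ℝ)) :=
              Real.rpow_le_rpow_of_exponent_ge hb0 hone.le he
          _ ≤ g₀ x := by rw [hg₀def]; exact le_add_of_nonneg_left (by positivity)
    set K₁ := R * (2 * Real.sqrt N^(R+1)) * C with hK₁def
    have hsq1 : (1:ℝ) ≤ Real.sqrt N^(R+1) := by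
      calc (1:ℝ) = Real.sqrt N^(0:ℝ) := (Real.rpow_zero _).symm
        _ ≤ Real.sqrt N^(R+1) := Real.rpow_le_rpow_of_exponent_le hsqN (by linarith)
    have hK₁0 : 0 ≤ K₁ := by
      rw [hK₁def]
      positivity
    have hdiffb : ∀ s ∈ Metric.ball s₀ ε, ∀ x ∈ S,
        ‖((‖x‖:ℝ):ℂ)^(-s-(N:ℂ)) - ((g x :ℝ):ℂ)^(-s-(N:ℂ))‖ ≤ K₁ * g₀ x := by
      intro s hs x hx
      obtain ⟨hga, hgb, -, hgC⟩ := hfacts x hx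
      have hb0 : 0 < ‖x‖ := hT.trans hx.2
      have h1 := aux_cpow_diff hga hgb hgC (-s-(N:ℂ))
      have hpabs : |(-s-(N:ℂ)).re - 1| ≤ R + 1 := by
        rw [hwre]
        obtain ⟨-, h2⟩ := hballre s hs
        have h3 : |s.re| ≤ ‖s‖ := Complex.abs_re_le_norm s
        rw [abs_le] at h3 ⊢
        rw [hRdef]
        constructor <;> [linarith [h3.1]; linarith [h3.2]]
      have hgen := hsqrt_gen x hx ((-s-(N:ℂ)).re - 1)
      have hsqle : Real.sqrt N^|(-s-(N:ℂ)).re - 1| ≤ Real.sqrt N^(R+1) :=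
        Real.rpow_le_rpow_of_exponent_le hsqN hpabs
      have hsum : (g x)^((-s-(N:ℂ)).re - 1) + ‖x‖^((-s-(N:ℂ)).re - 1)
          ≤ 2 * Real.sqrt N^(R+1) * ‖x‖^((-s-(N:ℂ)).re - 1) := by
        have hb1 : ‖x‖^((-s-(N:ℂ)).re-1) ≤ Real.sqrt N^(R+1) * ‖x‖^((-s-(N:ℂ)).re-1) :=
          le_mul_of_one_le_left (by positivity) hsq1
        have ha1 : (g x)^((-s-(N:ℂ)).re-1) ≤ Real.sqrt N^(R+1) * ‖x‖^((-s-(N:ℂ)).re-1) :=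
          hgen.trans (mul_le_mul_of_nonneg_right hsqle (by positivity))
        linarith
      calc ‖((‖x‖:ℝ):ℂ)^(-s-(N:ℂ)) - ((g x :ℝ):ℂ)^(-s-(N:ℂ))‖
          ≤ ‖-s-(N:ℂ)‖ * ((g x)^((-s-(N:ℂ)).re-1) + ‖x‖^((-s-(N:ℂ)).re-1))
            * (C/‖x‖) := h1
        _ ≤ R * (2 * Real.sqrt N^(R+1) * ‖x‖^((-s-(N:ℂ)).re-1)) * (C/‖x‖) := by
            apply mul_le_mul_of_nonneg_right _ (by positivity)
            exact mul_le_mul (habsw s hs) hsum (by positivity) hR0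
        _ = R * (2 * Real.sqrt N^(R+1)) * C * (‖x‖^((-s-(N:ℂ)).re-1) / ‖x‖) := by ring
        _ = R * (2 * Real.sqrt N^(R+1)) * C * ‖x‖^((-s-(N:ℂ)).re-2) := by
            have hre : ‖x‖^((-s-(N:ℂ)).re-2) = ‖x‖^((-s-(N:ℂ)).re-1) / ‖x‖ := by
              rw [show (-s-(N:ℂ)).re - 2 = ((-s-(N:ℂ)).re - 1) - 1 by ring,
                Real.rpow_sub_one hb0.ne']
            rw [hre]
        _ ≤ K₁ * g₀ x := by
            rw [hK₁def]
            exact mul_le_mul_of_nonneg_left (hexp_range s hs x hx) (by positivity)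
    set c₂ := C * Real.sqrt N / T^2 with hc₂def
    have hc₂0 : 0 ≤ c₂ := by rw [hc₂def]; positivity
    set K := K₁ * (1 + c₂) + C * Real.sqrt N with hKdef
    have hF'b : ∀ s ∈ Metric.ball s₀ ε, ∀ x ∈ S,
        ‖((‖x‖:ℝ):ℂ)^(-s-(N:ℂ)) * Complex.log ((‖x‖:ℝ):ℂ) * (-1)
          - ((g x :ℝ):ℂ)^(-s-(N:ℂ)) * Complex.log ((g x :ℝ):ℂ) * (-1)‖
        ≤ K * ((1 + |Real.log ‖x‖|) * g₀ x) := by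
      intro s hs x hx
      obtain ⟨hga, hgb, hles, hgC⟩ := hfacts x hx
      have hb0 : 0 < ‖x‖ := hT.trans hx.2
      have hbT : T ≤ ‖x‖ := hx.2.le
      have hloga : Complex.log ((g x :ℝ):ℂ) = ((Real.log (g x) :ℝ):ℂ) :=
        (Complex.ofReal_log hga.le).symm
      have hlogb : Complex.log ((‖x‖:ℝ):ℂ) = ((Real.log ‖x‖ :ℝ):ℂ) :=
        (Complex.ofReal_log (norm_nonneg x)).symm
      have hlogmono : Real.log (g x) ≤ Real.log ‖x‖ := Real.log_le_log hga hgb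
      have hlogd : Real.log ‖x‖ - Real.log (g x) ≤ C * Real.sqrt N / ‖x‖^2 := by
        have h1 : Real.log ‖x‖ - Real.log (g x) = Real.log (‖x‖ / g x) :=
          (Real.log_div hb0.ne' hga.ne').symm
        have h2 : Real.log (‖x‖ / g x) ≤ ‖x‖ / g x - 1 :=
          Real.log_le_sub_one_of_pos (by positivity)
        have h3 : ‖x‖ / g x - 1 = (‖x‖ - g x) / g x := by field_simp
        have h4 : ‖x‖ - g x ≤ C / ‖x‖ := by
          rw [le_div_iff₀ hb0]
          nlinarith
        have h5 : 1 / g x ≤ Real.sqrt N / ‖x‖ := by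
          rw [div_le_div_iff₀ hga hb0]
          linarith
        have h6 : (‖x‖ - g x) / g x ≤ (C / ‖x‖) * (Real.sqrt N / ‖x‖) := by
          have : (‖x‖ - g x) / g x = (‖x‖ - g x) * (1 / g x) := by ring
          rw [this]
          apply mul_le_mul h4 h5 (by positivity) (by positivity)
        have h7 : (C / ‖x‖) * (Real.sqrt N / ‖x‖) = C * Real.sqrt N / ‖x‖^2 := by
          field_simp
        linarith
      have hlogd2 : Real.log ‖x‖ - Real.log (g x) ≤ c₂ := by
        refine hlogd.trans ?_
        rw [hc₂def]
        apply div_le_div_of_nonneg_left (by positivity) (by positivity)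
        nlinarith
      have hLa : |Real.log (g x)| ≤ |Real.log ‖x‖| + c₂ := by
        have h1 : |Real.log (g x)| ≤ |Real.log ‖x‖| + |Real.log (g x) - Real.log ‖x‖| := by
          calc |Real.log (g x)| = |Real.log ‖x‖ + (Real.log (g x) - Real.log ‖x‖)| := by
                ring_nf
            _ ≤ _ := abs_add_le _ _
        have h2 : |Real.log (g x) - Real.log ‖x‖| = Real.log ‖x‖ - Real.log (g x) := by
          rw [abs_of_nonpos (by linarith), neg_sub]
        linarith
      have hAB : ‖((g x :ℝ):ℂ)^(-s-(N:ℂ)) - ((‖x‖:ℝ):ℂ)^(-s-(N:ℂ))‖ ≤ K₁ * g₀ x := by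
        rw [norm_sub_rev]
        exact hdiffb s hs x hx
      have hnB : ‖((‖x‖:ℝ):ℂ)^(-s-(N:ℂ))‖ = ‖x‖^((-s-(N:ℂ)).re) := by
        rw [Complex.norm_cpow_eq_rpow_re_of_pos hb0]
      have hpow2 : ‖x‖^((-s-(N:ℂ)).re - 2) = ‖x‖^((-s-(N:ℂ)).re) / ‖x‖^2 := by
        rw [show ((2:ℝ)) = ((2:ℕ):ℝ) by norm_num, Real.rpow_sub hb0, Real.rpow_natCast]
      have e2 : ‖((‖x‖:ℝ):ℂ)^(-s-(N:ℂ))‖ * |Real.log (g x) - Real.log ‖x‖|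
          ≤ C * Real.sqrt N * g₀ x := by
        have habs2 : |Real.log (g x) - Real.log ‖x‖| = Real.log ‖x‖ - Real.log (g x) := by
          rw [abs_of_nonpos (by linarith), neg_sub]
        calc ‖((‖x‖:ℝ):ℂ)^(-s-(N:ℂ))‖ * |Real.log (g x) - Real.log ‖x‖|
            = ‖x‖^((-s-(N:ℂ)).re) * (Real.log ‖x‖ - Real.log (g x)) := by
              rw [hnB, habs2]
          _ ≤ ‖x‖^((-s-(N:ℂ)).re) * (C * Real.sqrt N / ‖x‖^2) :=
              mul_le_mul_of_nonneg_left hlogd (by positivity)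
          _ = C * Real.sqrt N * (‖x‖^((-s-(N:ℂ)).re) / ‖x‖^2) := by ring
          _ = C * Real.sqrt N * ‖x‖^((-s-(N:ℂ)).re - 2) := by rw [hpow2]
          _ ≤ C * Real.sqrt N * g₀ x :=
              mul_le_mul_of_nonneg_left (hexp_range s hs x hx) (by positivity)
      have hrw : ((‖x‖:ℝ):ℂ)^(-s-(N:ℂ)) * Complex.log ((‖x‖:ℝ):ℂ) * (-1)
          - ((g x :ℝ):ℂ)^(-s-(N:ℂ)) * Complex.log ((g x :ℝ):ℂ) * (-1)
          = (((g x :ℝ):ℂ)^(-s-(N:ℂ)) - ((‖x‖:ℝ):ℂ)^(-s-(N:ℂ))) * ((Real.log (g x) :ℝ):ℂ)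
            + ((‖x‖:ℝ):ℂ)^(-s-(N:ℂ)) * (((Real.log (g x) - Real.log ‖x‖ :ℝ)):ℂ) := by
        rw [hloga, hlogb]
        push_cast
        ring
      calc ‖((‖x‖:ℝ):ℂ)^(-s-(N:ℂ)) * Complex.log ((‖x‖:ℝ):ℂ) * (-1)
          - ((g x :ℝ):ℂ)^(-s-(N:ℂ)) * Complex.log ((g x :ℝ):ℂ) * (-1)‖
          = ‖(((g x :ℝ):ℂ)^(-s-(N:ℂ)) - ((‖x‖:ℝ):ℂ)^(-s-(N:ℂ))) * ((Real.log (g x) :ℝ):ℂ)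
            + ((‖x‖:ℝ):ℂ)^(-s-(N:ℂ)) * (((Real.log (g x) - Real.log ‖x‖ :ℝ)):ℂ)‖ := by
            rw [hrw]
        _ ≤ ‖((g x :ℝ):ℂ)^(-s-(N:ℂ)) - ((‖x‖:ℝ):ℂ)^(-s-(N:ℂ))‖ * |Real.log (g x)|
            + ‖((‖x‖:ℝ):ℂ)^(-s-(N:ℂ))‖ * |Real.log (g x) - Real.log ‖x‖| := by
            refine (norm_add_le _ _).trans ?_
            rw [norm_mul, norm_mul, Complex.norm_real, Complex.norm_real,
              Real.norm_eq_abs, Real.norm_eq_abs]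
        _ ≤ K₁ * g₀ x * (|Real.log ‖x‖| + c₂) + C * Real.sqrt N * g₀ x := by
            apply add_le_add _ e2
            exact mul_le_mul hAB hLa (abs_nonneg _) (by positivity)
        _ ≤ K₁ * (1 + c₂) * ((1 + |Real.log ‖x‖|) * g₀ x)
            + C * Real.sqrt N * ((1 + |Real.log ‖x‖|) * g₀ x) := by
            apply add_le_add
            · have e3 : |Real.log ‖x‖| + c₂ ≤ (1 + c₂) * (1 + |Real.log ‖x‖|) := by
                nlinarith [mul_nonneg hc₂0 (abs_nonneg (Real.log ‖x‖)),
                  abs_nonneg (Real.log ‖x‖)]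
              calc K₁ * g₀ x * (|Real.log ‖x‖| + c₂)
                  ≤ K₁ * g₀ x * ((1 + c₂) * (1 + |Real.log ‖x‖|)) :=
                    mul_le_mul_of_nonneg_left e3 (mul_nonneg hK₁0 (hg₀nn x))
                _ = K₁ * (1 + c₂) * ((1 + |Real.log ‖x‖|) * g₀ x) := by ring
            · apply mul_le_mul_of_nonneg_left _ (by positivity)
              exact le_mul_of_one_le_left (hg₀nn x)
                (by linarith [abs_nonneg (Real.log ‖x‖)])
        _ = K * ((1 + |Real.log ‖x‖|) * g₀ x) := by rw [hKdef]; ring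
    -- integrability of the bound
    have hbint : Integrable (fun x => K * ((1 + |Real.log ‖x‖|) * g₀ x))
        (volume.restrict S) := by
      have h1 := (((hlogint q₁ hq₁D).add (hlogint q₂ hq₂D)).const_mul K)
      refine h1.congr (ae_of_all _ fun x => ?_)
      simp only [hg₀def, Pi.add_apply]
      rw [← mul_add]
    -- apply the dominated-derivative theorem
    have key := hasDerivAt_integral_of_dominated_loc_of_deriv_le
      (F := fun s x => ((‖x‖:ℝ):ℂ)^(-s-(N:ℂ)) - ((g x :ℝ):ℂ)^(-s-(N:ℂ)))
      (F' := fun s x => ((‖x‖:ℝ):ℂ)^(-s-(N:ℂ)) * Complex.log ((‖x‖:ℝ):ℂ) * (-1)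
        - ((g x :ℝ):ℂ)^(-s-(N:ℂ)) * Complex.log ((g x :ℝ):ℂ) * (-1))
      (μ := volume.restrict S) (x₀ := s₀)
      (bound := fun x => K * ((1 + |Real.log ‖x‖|) * g₀ x))
      (Metric.ball_mem_nhds s₀ hε) (Eventually.of_forall fun s => haesm _) ?_ ?_ ?_ hbint ?_
    · obtain ⟨-, hderiv⟩ := key
      exact hderiv.differentiableAt.differentiableWithinAt
    · -- integrability at s₀
      apply Integrable.mono' (hg₀int.const_mul K₁) (haesm _)
      filter_upwards [ae_restrict_mem hSmeas] with x hx
      exact hdiffb s₀ (Metric.mem_ball_self hε) x hx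
    · -- measurability of F' s₀
      apply ContinuousOn.aestronglyMeasurable _ hSmeas
      intro x hx
      have hb0 : 0 < ‖x‖ := hT.trans hx.2
      have hg0 := (hfacts x hx).1
      have hcb : ContinuousAt (fun x : EuclideanSpace ℝ (Fin N) => ((‖x‖:ℝ):ℂ)) x :=
        (Complex.continuous_ofReal.comp continuous_norm).continuousAt
      have hca : ContinuousAt (fun x : EuclideanSpace ℝ (Fin N) => ((g x :ℝ):ℂ)) x :=
        (Complex.continuous_ofReal.comp hg_cont).continuousAt
      apply ContinuousWithinAt.sub
      · apply ContinuousWithinAt.mul _ continuousWithinAt_const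
        apply ContinuousWithinAt.mul
        · exact ((Complex.continuousAt_ofReal_cpow_const _ _ (Or.inr hb0.ne')).comp
            continuous_norm.continuousAt).continuousWithinAt
        · exact ((continuousAt_clog (Complex.mem_slitPlane_iff.mpr (Or.inl (by simpa using hb0)))).comp
            hcb).continuousWithinAt
      · apply ContinuousWithinAt.mul _ continuousWithinAt_const
        apply ContinuousWithinAt.mul
        · exact ((Complex.continuousAt_ofReal_cpow_const _ _ (Or.inr hg0.ne')).comp
            hg_cont.continuousAt).continuousWithinAt
        · exact ((continuousAt_clog (Complex.mem_slitPlane_iff.mpr (Or.inl (by simpa using hg0)))).comp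
            hca).continuousWithinAt
    · -- the bound on the derivative
      filter_upwards [ae_restrict_mem hSmeas] with x hx
      intro s hs
      exact hF'b s hs x hx
    · -- differentiability in s
      filter_upwards [ae_restrict_mem hSmeas] with x hx
      intro s hs
      have hb0 : 0 < ‖x‖ := hT.trans hx.2
      have hg0 := (hfacts x hx).1
      have hbne : ((‖x‖:ℝ):ℂ) ≠ 0 := Complex.ofReal_ne_zero.2 hb0.ne'
      have hgne : ((g x :ℝ):ℂ) ≠ 0 := Complex.ofReal_ne_zero.2 hg0.ne'
      have h1 : HasDerivAt (fun s : ℂ => -s - (N:ℂ)) (-1) s := by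
        simpa using ((hasDerivAt_id s).neg.sub_const (N:ℂ))
      exact (h1.const_cpow (Or.inl hbne)).sub (h1.const_cpow (Or.inl hgne))
  · -- the equality for Re s > D
    intro s hs
    have hbint2 : IntegrableOn (fun x => ((‖x‖:ℝ):ℂ)^(-s-(N:ℂ))) S volume := by
      apply Integrable.mono' (hint s.re hs) (haesm_b _)
      filter_upwards [ae_restrict_mem hSmeas] with x hx
      have hb0 : 0 < ‖x‖ := hT.trans hx.2
      rw [Complex.norm_cpow_eq_rpow_re_of_pos hb0, hwre]
    have haint2 : IntegrableOn (fun x => ((g x :ℝ):ℂ)^(-s-(N:ℂ))) S volume := by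
      apply Integrable.mono'
        ((hint s.re hs).const_mul (Real.sqrt N^|(-s.re - (N:ℝ))|)) (haesm_a _)
      filter_upwards [ae_restrict_mem hSmeas] with x hx
      have hga := (hfacts x hx).1
      rw [Complex.norm_cpow_eq_rpow_re_of_pos hga, hwre]
      exact hsqrt_gen x hx _
    exact integral_sub hbint2 haint2
end

section
/- Let α > 0, β > 1 and Ω(α,β) := ⋃_{j=1}^∞ (j^α, j^α + j^{-β}) ⊆ ℝ. Let j₀ ≥ 1 be an integer such that j^α + j^{-β} ≤ (j+1)^α for all j ≥ j₀ and j^α + j^{-β} ≤ j₀^α for all 1 ≤ j < j₀, and set T := j₀^α. Then for every s ∈ ℂ with Re s > (1-(α+β))/α and s ≠ 0, ∫_{Ω(α,β) ∩ (T,∞)} x^{-s-1} dx = (1/s)·Σ_{j=j₀}^∞ ( (j^α)^{-s} - (j^α + j^{-β})^{-s} ), where the series converges absolutely; here c^w denotes the complex power of the positive real c. -/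
open MeasureTheory Filter
open scoped Topology ENNReal

/-- Let `α > 0`, `β > 1` and `Ω(α,β) = ⋃_{j≥1} (j^α, j^α + j^{-β}) ⊆ ℝ`.
Let `j₀ ≥ 1` be such that `j^α + j^{-β} ≤ (j+1)^α` for all `j ≥ j₀` and
`j^α + j^{-β} ≤ j₀^α` for `1 ≤ j < j₀`, and set `T = j₀^α`. Then for every `s ∈ ℂ` with
`Re s > (1-(α+β))/α` and `s ≠ 0`,
`∫_{Ω(α,β) ∩ (T,∞)} x^{-s-1} dx = (1/s)·Σ_{j≥j₀} ((j^α)^{-s} - (j^α + j^{-β})^{-s})`,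
the series converging absolutely. -/
theorem stmt_17 (α β : ℝ) (hα : 0 < α) (hβ : 1 < β)
    (Ω : Set ℝ)
    (hΩ : Ω = ⋃ j : ℕ,
      Set.Ioo (((j : ℝ) + 1) ^ α) (((j : ℝ) + 1) ^ α + ((j : ℝ) + 1) ^ (-β)))
    (j₀ : ℕ) (hj₀ : 1 ≤ j₀)
    (h₁ : ∀ j : ℕ, j₀ ≤ j → (j : ℝ) ^ α + (j : ℝ) ^ (-β) ≤ ((j : ℝ) + 1) ^ α)
    (h₂ : ∀ j : ℕ, 1 ≤ j → j < j₀ → (j : ℝ) ^ α + (j : ℝ) ^ (-β) ≤ (j₀ : ℝ) ^ α)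
    (s : ℂ) (hs : (1 - (α + β)) / α < s.re) (hs0 : s ≠ 0) :
    Summable (fun j : ℕ =>
      ((((j₀ + j : ℕ) : ℝ) ^ α : ℝ) : ℂ) ^ (-s) -
        ((((j₀ + j : ℕ) : ℝ) ^ α + ((j₀ + j : ℕ) : ℝ) ^ (-β) : ℝ) : ℂ) ^ (-s)) ∧
    ∫ x in Ω ∩ Set.Ioi ((j₀ : ℝ) ^ α), (x : ℂ) ^ (-s - 1) =
      (1 / s) * ∑' j : ℕ,
        (((((j₀ + j : ℕ) : ℝ) ^ α : ℝ) : ℂ) ^ (-s) -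
          ((((j₀ + j : ℕ) : ℝ) ^ α + ((j₀ + j : ℕ) : ℝ) ^ (-β) : ℝ) : ℂ) ^ (-s)) := by
  -- notation
  have hf : True := trivial
  let f : ℝ → ℂ := fun x => (x : ℂ) ^ (-s - 1)
  let a : ℕ → ℝ := fun j => ((j₀ + j : ℕ) : ℝ) ^ α
  let b : ℕ → ℝ := fun j => ((j₀ + j : ℕ) : ℝ) ^ α + ((j₀ + j : ℕ) : ℝ) ^ (-β)
  let t : ℕ → ℂ := fun j => ((a j : ℝ) : ℂ) ^ (-s) - ((b j : ℝ) : ℂ) ^ (-s)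
  have hk1 : ∀ j : ℕ, (1 : ℝ) ≤ ((j₀ + j : ℕ) : ℝ) := by
    intro j; exact_mod_cast Nat.le_add_right_of_le hj₀
  have hk0 : ∀ j : ℕ, (0 : ℝ) < ((j₀ + j : ℕ) : ℝ) := fun j => lt_of_lt_of_le one_pos (hk1 j)
  have hka : ∀ j : ℕ, (1 : ℝ) ≤ a j := fun j => Real.one_le_rpow (hk1 j) hα.le
  have hka0 : ∀ j : ℕ, (0 : ℝ) < a j := fun j => lt_of_lt_of_le one_pos (hka j)
  have hab : ∀ j : ℕ, a j < b j := fun j =>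
    lt_add_of_pos_right _ (Real.rpow_pos_of_pos (hk0 j) _)
  have hbnext : ∀ j : ℕ, b j ≤ (((j₀ + j : ℕ) : ℝ) + 1) ^ α := fun j =>
    h₁ (j₀ + j) (Nat.le_add_right _ _)
  let S : ℕ → Set ℝ := fun j => Set.Ioo (a j) (b j)
  -- set identity
  have hset : Ω ∩ Set.Ioi ((j₀ : ℝ) ^ α) = ⋃ j : ℕ, S j := by
    ext x
    simp only [hΩ, S, Set.mem_inter_iff, Set.mem_iUnion, Set.mem_Ioo, Set.mem_Ioi]
    constructor
    · rintro ⟨⟨m, hm1, hm2⟩, hxT⟩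
      have hcast : ((m : ℝ) + 1) = ((m + 1 : ℕ) : ℝ) := by push_cast; ring
      rw [hcast] at hm1 hm2
      have hmj : j₀ ≤ m + 1 := by
        by_contra h
        push_neg at h
        have := h₂ (m + 1) (by omega) (by omega)
        exact absurd (hm2.trans_le this) (not_lt.2 hxT.le)
      refine ⟨m + 1 - j₀, ?_, ?_⟩
      · show ((j₀ + (m + 1 - j₀) : ℕ) : ℝ) ^ α < x
        have h3 : j₀ + (m + 1 - j₀) = m + 1 := by omega
        rw [h3]; exact hm1
      · show x < ((j₀ + (m + 1 - j₀) : ℕ) : ℝ) ^ α + ((j₀ + (m + 1 - j₀) : ℕ) : ℝ) ^ (-β)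
        have h3 : j₀ + (m + 1 - j₀) = m + 1 := by omega
        rw [h3]; exact hm2
    · rintro ⟨j, hx1, hx2⟩
      have hkey : j₀ + j = (j₀ + j - 1) + 1 := by omega
      have hcast : (((j₀ + j - 1 : ℕ) : ℝ) + 1) = ((j₀ + j : ℕ) : ℝ) := by
        rw [hkey]; push_cast; ring
      refine ⟨⟨j₀ + j - 1, ?_, ?_⟩, ?_⟩
      · rw [hcast]; exact hx1
      · rw [hcast]; exact hx2
      · refine lt_of_le_of_lt ?_ hx1
        exact Real.rpow_le_rpow (Nat.cast_nonneg _) (by exact_mod_cast Nat.le_add_right _ _) hα.le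
  -- pairwise disjointness
  have key : ∀ {i l : ℕ}, i < l → b i ≤ a l := by
    intro i l hil
    refine (hbnext i).trans ?_
    refine Real.rpow_le_rpow (by positivity) ?_ hα.le
    have : (j₀ + i : ℕ) + 1 ≤ (j₀ + l : ℕ) := by omega
    exact_mod_cast this
  have hdisj : Pairwise (Function.onFun Disjoint S) := by
    intro i l hil
    have : Disjoint (S i) (S l) := by
      rcases hil.lt_or_gt with h | h
      · exact Set.Ioo_disjoint_Ioo.mpr
          ((min_le_left _ _).trans ((key h).trans (le_max_right _ _)))
      · exact Set.Ioo_disjoint_Ioo.mpr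
          ((min_le_right _ _).trans ((key h).trans (le_max_left _ _)))
    exact this
  -- integrability on each interval
  have hcont : ∀ j : ℕ, IntegrableOn f (S j) := by
    intro j
    have hc : ContinuousOn f (Set.Icc (a j) (b j)) := by
      intro x hx
      have hx0 : (0 : ℝ) < x := lt_of_lt_of_le (hka0 j) hx.1
      exact ((continuousAt_cpow_const
        (Or.inl (by simpa using hx0))).comp
        Complex.continuous_ofReal.continuousAt).continuousWithinAt
    exact (hc.integrableOn_Icc).mono_set Set.Ioo_subset_Icc_self
  -- norm of the integrand
  have hnorm : ∀ {x : ℝ}, 0 < x → ‖f x‖ = x ^ (-(s.re + 1)) := by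
    intro x hx
    rw [show f x = (x : ℂ) ^ (-s - 1) from rfl,
      Complex.norm_cpow_eq_rpow_re_of_pos hx]
    congr 1
    simp [Complex.sub_re]
    ring
  -- summable majorant
  set p : ℝ := s.re + 1 with hp
  set q : ℝ := β + α * p with hq
  have hq1 : 1 < q := by
    have h := (div_lt_iff₀ hα).mp hs
    rw [hq, hp]
    nlinarith
  set C : ℝ := max 1 (2 ^ (-(α * p))) with hC
  have hC1 : (1 : ℝ) ≤ C := le_max_left _ _
  have hptwise : ∀ j : ℕ, ∀ x ∈ S j, ‖f x‖ ≤ C * ((j₀ + j : ℕ) : ℝ) ^ (-(α * p)) := by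
    intro j x hx
    have hx0 : (0 : ℝ) < x := lt_of_lt_of_le (hka0 j) hx.1.le
    rw [hnorm hx0]
    have hk := hk0 j
    rcases le_or_gt 0 p with hp0 | hp0
    · have h1 : x ^ (-p) ≤ (a j) ^ (-p) :=
        Real.rpow_le_rpow_of_nonpos (hka0 j) hx.1.le (by linarith)
      have h2 : (a j) ^ (-p) = ((j₀ + j : ℕ) : ℝ) ^ (-(α * p)) := by
        show (((j₀ + j : ℕ) : ℝ) ^ α) ^ (-p) = _
        rw [← Real.rpow_mul hk.le]
        congr 1; ring
      calc x ^ (-p) ≤ ((j₀ + j : ℕ) : ℝ) ^ (-(α * p)) := h2 ▸ h1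
        _ ≤ C * ((j₀ + j : ℕ) : ℝ) ^ (-(α * p)) := by
            nlinarith [Real.rpow_pos_of_pos hk (-(α * p))]
    · -- p < 0 : use the upper bound b j ≤ (2k)^α
      have hb2 : x ≤ (2 * ((j₀ + j : ℕ) : ℝ)) ^ α := by
        refine hx.2.le.trans ((hbnext j).trans ?_)
        refine Real.rpow_le_rpow (by positivity) ?_ hα.le
        linarith [hk1 j]
      have h1 : x ^ (-p) ≤ ((2 * ((j₀ + j : ℕ) : ℝ)) ^ α) ^ (-p) :=
        Real.rpow_le_rpow hx0.le hb2 (by linarith)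
      have h2 : ((2 * ((j₀ + j : ℕ) : ℝ)) ^ α) ^ (-p)
          = 2 ^ (-(α * p)) * ((j₀ + j : ℕ) : ℝ) ^ (-(α * p)) := by
        rw [← Real.rpow_mul (by positivity), Real.mul_rpow (by norm_num) hk.le]
        congr 2 <;> ring
      calc x ^ (-p) ≤ 2 ^ (-(α * p)) * ((j₀ + j : ℕ) : ℝ) ^ (-(α * p)) := h2 ▸ h1
        _ ≤ C * ((j₀ + j : ℕ) : ℝ) ^ (-(α * p)) := by
            have := Real.rpow_pos_of_pos hk (-(α * p))
            nlinarith [le_max_right (1 : ℝ) (2 ^ (-(α * p)))]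
  -- integral-norm bound on each piece
  have hbound : ∀ j : ℕ, ∫ x in S j, ‖f x‖ ≤ C * ((j₀ + j : ℕ) : ℝ) ^ (-q) := by
    intro j
    have hk := hk0 j
    have hmeas : (volume (S j)).toReal = ((j₀ + j : ℕ) : ℝ) ^ (-β) := by
      show (volume (Set.Ioo (a j) (b j))).toReal = _
      rw [Real.volume_Ioo, ENNReal.toReal_ofReal (by linarith [hab j])]
      show (((j₀ + j : ℕ) : ℝ) ^ α + ((j₀ + j : ℕ) : ℝ) ^ (-β)) - ((j₀ + j : ℕ) : ℝ) ^ α = _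
      ring
    have h1 : ∫ x in S j, ‖f x‖ ≤ ∫ _x in S j, (C * ((j₀ + j : ℕ) : ℝ) ^ (-(α * p))) := by
      refine setIntegral_mono_on (hcont j).norm ((integrableOn_const_iff (by finiteness)).mpr ?_)
        measurableSet_Ioo (hptwise j)
      right; rw [Real.volume_Ioo]; exact ENNReal.ofReal_lt_top
    rw [setIntegral_const, smul_eq_mul, measureReal_def, hmeas] at h1
    refine h1.trans (le_of_eq ?_)
    rw [mul_comm, mul_assoc, ← Real.rpow_add hk]
    congr 2
    rw [hq]; ring
  have hmaj : Summable (fun j : ℕ => C * ((j₀ + j : ℕ) : ℝ) ^ (-q)) := by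
    apply Summable.mul_left
    have h0 : Summable (fun n : ℕ => (n : ℝ) ^ (-q)) :=
      Real.summable_nat_rpow.mpr (by linarith)
    exact h0.comp_injective (fun i j h => by omega)
  have hgs : Summable (fun j : ℕ => ∫ x in S j, ‖f x‖) := by
    refine Summable.of_nonneg_of_le
      (fun j => setIntegral_nonneg measurableSet_Ioo (fun x _ => norm_nonneg _)) hbound hmaj
  have hIntU : IntegrableOn f (⋃ j, S j) :=
    integrableOn_iUnion_of_summable_integral_norm hcont hgs
  have hHS : HasSum (fun j : ℕ => ∫ x in S j, f x) (∫ x in ⋃ j, S j, f x) :=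
    hasSum_integral_iUnion (fun j => measurableSet_Ioo) hdisj hIntU
  -- value of each piece
  have hne : (-s - 1 : ℂ) ≠ -1 := by
    intro h; apply hs0; linear_combination -h
  have hint : ∀ j : ℕ, ∫ x in S j, f x = (1 / s) * t j := by
    intro j
    have hmem : (0 : ℝ) ∉ Set.uIcc (a j) (b j) := by
      rw [Set.uIcc_of_le (hab j).le]
      rintro ⟨h0, -⟩; linarith [hka0 j]
    have : ∫ x in S j, f x = ∫ x in (a j)..(b j), (x : ℂ) ^ (-s - 1) := by
      rw [intervalIntegral.integral_of_le (hab j).le, integral_Ioc_eq_integral_Ioo]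
    rw [this, integral_cpow (Or.inr ⟨hne, hmem⟩)]
    have h1 : (-s - 1 : ℂ) + 1 = -s := by ring
    rw [h1]
    show _ = 1 / s * (((a j : ℝ) : ℂ) ^ (-s) - ((b j : ℝ) : ℂ) ^ (-s))
    rw [div_neg, ← neg_div, neg_sub, div_eq_mul_inv, one_div, mul_comm]
  have hHS' : HasSum (fun j : ℕ => (1 / s) * t j) (∫ x in ⋃ j, S j, f x) := by
    have := hHS
    simp only [hint] at this
    exact this
  have hsumt : Summable t := by
    have h1 := (hHS'.summable).mul_left s
    have h2 : (fun j => s * (1 / s * t j)) = t := by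
      funext j; field_simp
    rwa [h2] at h1
  refine ⟨hsumt, ?_⟩
  rw [hset]
  have hfin : ∫ x in ⋃ j, S j, f x = (1 / s) * ∑' j, t j := by
    rw [← hHS'.tsum_eq, tsum_mul_left]
  exact hfin
end

section
/- For k ≥ 1 set S_k := Σ_{j=1}^k 2^{-j}/j, S_0 := 0, and define Ω := ⋃_{k=1}^∞ Ω_k ⊆ ℝ², where Ω_k := {(x,y) ∈ ℝ² : x > 1, S_{k-1} < y < S_{k-1} + (2^{-k}/k)·x^{-1-1/k}}. Then the Ω_k are pairwise disjoint, |Ω| = 1, and for every s ∈ ℂ with Re s > -2, ∫_Ω x^{-s-2} d(x,y) = Σ_{k=1}^∞ 2^{-k} / ( k·(s + 2 + 1/k) ), where the series converges absolutely and x^{-s-2} denotes the complex power of the positive real x. (Since 0 < y < log 2 < 1 < x on Ω, this integral is exactly the Lapidus zeta function of Ω at infinity with respect to the sup-norm on ℝ² with T = 1.) -/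
open MeasureTheory Filter
open scoped Topology ENNReal

/-- `S_k = Σ_{j=1}^k 2^{-j}/j` (here `S18 k` is the sum of the first `k` terms, `S18 0 = 0`). -/
noncomputable def S18 (k : ℕ) : ℝ :=
  ∑ j ∈ Finset.range k, ((2 : ℝ) ^ (j + 1))⁻¹ / ((j : ℝ) + 1)

/-- `Ω_k = {(x,y) : x > 1, S_{k-1} < y < S_{k-1} + (2^{-k}/k)·x^{-1-1/k}}`; here `O18 k`
corresponds to the paper's `Ω_{k+1}`, i.e. the index is shifted by one. -/
noncomputable def O18 (k : ℕ) : Set (EuclideanSpace ℝ (Fin 2)) :=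
  {p | 1 < p 0 ∧ S18 k < p 1 ∧
    p 1 < S18 k + ((2 : ℝ) ^ (k + 1))⁻¹ / ((k : ℝ) + 1) *
      (p 0) ^ (-1 - 1 / ((k : ℝ) + 1))}

namespace Stmt18Aux

open Set

/-- The coefficient `c k = 2^{-(k+1)}/(k+1)`. -/
noncomputable def cc (k : ℕ) : ℝ := ((2 : ℝ) ^ (k + 1))⁻¹ / ((k : ℝ) + 1)

/-- The exponent `r k = -1 - 1/(k+1)`. -/
noncomputable def rr (k : ℕ) : ℝ := -1 - 1 / ((k : ℝ) + 1)

lemma cc_pos (k : ℕ) : 0 < cc k := by unfold cc; positivity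

lemma rr_lt (k : ℕ) : rr k < -1 := by
  unfold rr
  have : 0 < 1 / ((k : ℝ) + 1) := by positivity
  linarith

/-- The region in `ℝ × ℝ` corresponding to `O18 k`. -/
noncomputable def RR (k : ℕ) : Set (ℝ × ℝ) :=
  regionBetween (fun _ => S18 k) (fun x => S18 k + cc k * x ^ rr k) (Ioi 1)

lemma measurable_g (k : ℕ) : Measurable (fun x : ℝ => S18 k + cc k * x ^ rr k) := by
  measurability

lemma measurableSet_RR (k : ℕ) : MeasurableSet (RR k) :=
  measurableSet_regionBetween measurable_const (measurable_g k) measurableSet_Ioi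

/-- The measure preserving identification of the Euclidean plane with `ℝ × ℝ`. -/
noncomputable def φ : EuclideanSpace ℝ (Fin 2) ≃ᵐ ℝ × ℝ :=
  (MeasurableEquiv.toLp 2 (Fin 2 → ℝ)).symm.trans (MeasurableEquiv.finTwoArrow)

lemma φ_mp : MeasurePreserving φ volume volume :=
  (EuclideanSpace.volume_preserving_symm_measurableEquiv_toLp (Fin 2)).trans
    (volume_preserving_finTwoArrow ℝ)

lemma O18_eq (k : ℕ) : O18 k = φ ⁻¹' RR k := by
  ext p
  simp only [O18, RR, regionBetween, cc, rr, Set.mem_setOf_eq, Set.mem_preimage,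
    Set.mem_Ioo, Set.mem_Ioi]
  exact ⟨fun h => ⟨h.1, h.2.1, h.2.2⟩, fun h => ⟨h.1, h.2.1, h.2.2⟩⟩

lemma measurableSet_O18 (k : ℕ) : MeasurableSet (O18 k) := by
  rw [O18_eq]; exact φ.measurable (measurableSet_RR k)


/-- Fubini for the region between the graphs, integrand depending on first coordinate only. -/
lemma fubini_region {E : Type*} [NormedAddCommGroup E] [NormedSpace ℝ E]
    [MeasurableSpace E] [BorelSpace E] [SecondCountableTopology E] [CompleteSpace E]
    (a c r : ℝ) (hc : 0 ≤ c) (F : ℝ → E) (hF : Measurable F)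
    (hInt : IntegrableOn (fun x => ‖F x‖ * (c * x ^ r)) (Ioi 1)) :
    IntegrableOn (fun p : ℝ × ℝ => F p.1)
      (regionBetween (fun _ => a) (fun x => a + c * x ^ r) (Ioi 1)) ∧
    (∫ p in regionBetween (fun _ => a) (fun x => a + c * x ^ r) (Ioi 1), F p.1) =
      ∫ x in Ioi (1 : ℝ), (c * x ^ r) • F x := by
  set g : ℝ → ℝ := fun x => a + c * x ^ r with hg_def
  have hg : Measurable g := by measurability
  set R := regionBetween (fun _ => a) g (Ioi 1) with hR_def
  have hR : MeasurableSet R :=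
    measurableSet_regionBetween measurable_const hg measurableSet_Ioi
  set f : ℝ × ℝ → E := R.indicator (fun p => F p.1) with hf_def
  have hfm : Measurable f := ((hF.comp measurable_fst).indicator hR)
  have hslice : ∀ x y : ℝ, f (x, y) =
      if 1 < x then (Ioo a (g x)).indicator (fun _ => F x) y else 0 := by
    intro x y
    by_cases hx : 1 < x
    · simp [hf_def, hR_def, regionBetween, Set.indicator_apply, hx]
    · simp [hf_def, hR_def, regionBetween, Set.indicator_apply, hx]
  have hslice_int : ∀ x : ℝ, Integrable (fun y => f (x, y)) volume := by
    intro x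
    have h1 : (fun y => f (x, y)) =
        if 1 < x then (Ioo a (g x)).indicator (fun _ => F x) else 0 := by
      funext y; rw [hslice x y]; split_ifs <;> rfl
    rw [h1]
    split_ifs with hx
    · exact (integrable_indicator_iff measurableSet_Ioo).2
        (integrableOn_const measure_Ioo_lt_top.ne)
    · exact integrable_zero _ _ _
  have hga : ∀ x : ℝ, g x - a = c * x ^ r := by intro x; simp [hg_def]
  have hnorm : ∀ x : ℝ, (∫ y, ‖f (x, y)‖) =
      (Ioi (1 : ℝ)).indicator (fun x => ‖F x‖ * (c * x ^ r)) x := by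
    intro x
    by_cases hx : 1 < x
    · have h0 : (0 : ℝ) < x := lt_trans one_pos hx
      have hcr : 0 ≤ c * x ^ r := by positivity
      have h1 : (fun y => ‖f (x, y)‖) = (Ioo a (g x)).indicator (fun _ => ‖F x‖) := by
        funext y
        rw [hslice x y, if_pos hx]
        by_cases hy : y ∈ Ioo a (g x) <;> simp [Set.indicator_apply, hy]
      rw [h1, integral_indicator_const _ measurableSet_Ioo, Real.volume_real_Ioo, hga x,
        max_eq_left hcr, Set.indicator_of_mem (show x ∈ Ioi (1 : ℝ) from hx)]
      simp [mul_comm]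
    · have h1 : (fun y => ‖f (x, y)‖) = fun _ => (0 : ℝ) := by
        funext y; rw [hslice x y, if_neg hx]; simp
      rw [h1, Set.indicator_of_notMem (show x ∉ Ioi (1 : ℝ) from hx)]
      simp
  have hIntf : Integrable f ((volume : Measure ℝ).prod volume) := by
    refine (integrable_prod_iff hfm.aestronglyMeasurable).2 ⟨?_, ?_⟩
    · exact Eventually.of_forall hslice_int
    · rw [show (fun x => ∫ y, ‖f (x, y)‖) =
        (Ioi (1 : ℝ)).indicator (fun x => ‖F x‖ * (c * x ^ r)) from funext hnorm]
      exact (integrable_indicator_iff measurableSet_Ioi).2 hInt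
  have hIntf' : Integrable f (volume : Measure (ℝ × ℝ)) := hIntf
  have hIntOn : IntegrableOn (fun p : ℝ × ℝ => F p.1) R :=
    (integrable_indicator_iff hR).1 hIntf'
  refine ⟨hIntOn, ?_⟩
  have hinner : ∀ x : ℝ, (∫ y, f (x, y)) =
      (Ioi (1 : ℝ)).indicator (fun x => (c * x ^ r) • F x) x := by
    intro x
    by_cases hx : 1 < x
    · have h0 : (0 : ℝ) < x := lt_trans one_pos hx
      have hcr : 0 ≤ c * x ^ r := by positivity
      have h1 : (fun y => f (x, y)) = (Ioo a (g x)).indicator (fun _ => F x) := by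
        funext y; rw [hslice x y, if_pos hx]
      rw [h1, integral_indicator_const _ measurableSet_Ioo, Real.volume_real_Ioo, hga x,
        max_eq_left hcr, Set.indicator_of_mem (show x ∈ Ioi (1 : ℝ) from hx)]
    · have h1 : (fun y => f (x, y)) = fun _ => (0 : E) := by
        funext y; rw [hslice x y, if_neg hx]
      rw [h1, Set.indicator_of_notMem (show x ∉ Ioi (1 : ℝ) from hx)]
      simp
  calc (∫ p in R, F p.1) = ∫ p, f p := (integral_indicator hR).symm
    _ = ∫ x, ∫ y, f (x, y) := integral_prod f hIntf
    _ = ∫ x, (Ioi (1 : ℝ)).indicator (fun x => (c * x ^ r) • F x) x := by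
        exact integral_congr_ae (Eventually.of_forall hinner)
    _ = ∫ x in Ioi (1 : ℝ), (c * x ^ r) • F x := integral_indicator measurableSet_Ioi


lemma integral_cxr (k : ℕ) : (∫ x in Ioi (1 : ℝ), cc k * x ^ rr k) = ((2 : ℝ) ^ (k + 1))⁻¹ := by
  rw [integral_const_mul, integral_Ioi_rpow_of_lt (rr_lt k) one_pos, Real.one_rpow]
  have hk : ((k : ℝ) + 1) ≠ 0 := by positivity
  have h2 : ((2 : ℝ) ^ (k + 1)) ≠ 0 := by positivity
  have hrk : rr k + 1 = -(((k : ℝ) + 1)⁻¹) := by unfold rr; field_simp; ring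
  rw [hrk]
  unfold cc
  field_simp

lemma intOn_cxr (k : ℕ) : IntegrableOn (fun x : ℝ => cc k * x ^ rr k) (Ioi 1) :=
  (integrableOn_Ioi_rpow_of_lt (rr_lt k) one_pos).const_mul _

lemma volume_RR (k : ℕ) : volume (RR k) = ENNReal.ofReal ((2 : ℝ) ^ (k + 1))⁻¹ := by
  have h := volume_regionBetween_eq_lintegral' (μ := (volume : Measure ℝ)) (s := Ioi (1:ℝ))
    (measurable_const : Measurable fun _ : ℝ => S18 k) (measurable_g k) measurableSet_Ioi
  have hvol : volume (RR k) = ∫⁻ x in Ioi (1 : ℝ), ENNReal.ofReal (cc k * x ^ rr k) := by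
    rw [show (volume : Measure (ℝ × ℝ)) = (volume : Measure ℝ).prod volume from rfl, RR, h]
    congr 1
    funext x
    simp [Pi.sub_apply]
  rw [hvol, ← ofReal_integral_eq_lintegral_ofReal (intOn_cxr k) ?_, integral_cxr k]
  filter_upwards [ae_restrict_mem measurableSet_Ioi] with x hx
  have h0 : (0 : ℝ) < x := lt_trans one_pos hx
  have := cc_pos k
  positivity

lemma volume_O18 (k : ℕ) : volume (O18 k) = ENNReal.ofReal ((2 : ℝ) ^ (k + 1))⁻¹ := by
  rw [O18_eq, φ_mp.measure_preimage (measurableSet_RR k).nullMeasurableSet, volume_RR]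

lemma ofReal_halves (k : ℕ) :
    ENNReal.ofReal ((2 : ℝ) ^ (k + 1))⁻¹ = (2 : ℝ≥0∞)⁻¹ ^ (k + 1) := by
  rw [← inv_pow, ENNReal.ofReal_pow (by norm_num)]
  congr 1
  rw [ENNReal.ofReal_inv_of_pos two_pos]
  norm_num

lemma tsum_halves : (∑' k : ℕ, ENNReal.ofReal ((2 : ℝ) ^ (k + 1))⁻¹) = 1 := by
  rw [tsum_congr ofReal_halves]
  rw [tsum_congr (fun k : ℕ => pow_succ (2 : ℝ≥0∞)⁻¹ k), ENNReal.tsum_mul_right,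
    ENNReal.tsum_geometric, ENNReal.one_sub_inv_two, inv_inv]
  exact ENNReal.mul_inv_cancel (by norm_num) (by norm_num)

lemma S18_succ (k : ℕ) : S18 (k + 1) = S18 k + cc k := Finset.sum_range_succ _ _

lemma S18_mono : Monotone S18 := by
  intro k l hkl
  apply Finset.sum_le_sum_of_subset_of_nonneg (Finset.range_subset_range.2 hkl)
  intro i _ _
  positivity

lemma lt_S18_succ {k : ℕ} {p : EuclideanSpace ℝ (Fin 2)} (hp : p ∈ O18 k) :
    p 1 < S18 (k + 1) := by
  obtain ⟨h0, _h1, h2⟩ := hp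
  have hneg : -1 - 1 / ((k : ℝ) + 1) < 0 := by
    have : 0 < 1 / ((k : ℝ) + 1) := by positivity
    linarith
  have hx : (p 0) ^ (-1 - 1 / ((k : ℝ) + 1)) < 1 :=
    Real.rpow_lt_one_of_one_lt_of_neg h0 hneg
  have hc : 0 < ((2 : ℝ) ^ (k + 1))⁻¹ / ((k : ℝ) + 1) := cc_pos k
  rw [S18_succ]
  unfold cc
  nlinarith

lemma disj : ∀ k l : ℕ, k ≠ l → Disjoint (O18 k) (O18 l) := by
  have key : ∀ k l : ℕ, k < l → Disjoint (O18 k) (O18 l) := by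
    intro k l hkl
    rw [Set.disjoint_left]
    intro p hpk hpl
    have h1 : p 1 < S18 (k + 1) := lt_S18_succ hpk
    have h2 : S18 l < p 1 := hpl.2.1
    have h3 : S18 (k + 1) ≤ S18 l := S18_mono hkl
    linarith
  intro k l hkl
  rcases hkl.lt_or_gt with h | h
  · exact key k l h
  · exact (key l k h).symm

lemma key_int (s : ℂ) (hs : -2 < s.re) (k : ℕ) :
    IntegrableOn (fun p : ℝ × ℝ => ((p.1 : ℝ) : ℂ) ^ (-s - 2)) (RR k) ∧
    (∫ p in RR k, ((p.1 : ℝ) : ℂ) ^ (-s - 2)) =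
      ((2 : ℂ) ^ (k + 1))⁻¹ / (((k : ℂ) + 1) * (s + 2 + ((k : ℂ) + 1)⁻¹)) ∧
    (∫ p in RR k, ‖((p.1 : ℝ) : ℂ) ^ (-s - 2)‖) ≤ ((2 : ℝ)⁻¹) ^ (k + 1) / (s.re + 2) := by
  set F : ℝ → ℂ := fun x => (x : ℂ) ^ (-s - 2) with hF_def
  have hFm : Measurable F := by measurability
  have hsre : (-s - 2).re = -s.re - 2 := by simp
  have hσ : (-s - 2).re < 0 := by rw [hsre]; linarith
  have hexp : rr k + (-s - 2).re < -1 := by have := rr_lt k; linarith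
  have hknz : ((k : ℝ) + 1) ≠ 0 := by positivity
  have hnormF : ∀ x ∈ Ioi (1 : ℝ), ‖F x‖ = x ^ ((-s - 2).re) := by
    intro x hx
    rw [hF_def,
      Complex.norm_cpow_eq_rpow_re_of_pos (lt_trans one_pos hx)]
  have hInt : IntegrableOn (fun x => ‖F x‖ * (cc k * x ^ rr k)) (Ioi 1) := by
    refine IntegrableOn.congr_fun
      ((integrableOn_Ioi_rpow_of_lt hexp one_pos).const_mul (cc k))
      (fun x hx => ?_) measurableSet_Ioi
    have h0 : (0 : ℝ) < x := lt_trans one_pos hx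
    rw [hnormF x hx, Real.rpow_add h0]
    ring
  have hfub := fubini_region (S18 k) (cc k) (rr k) (cc_pos k).le F hFm hInt
  have hedenom : rr k + (-s - 2).re + 1 = -(s.re + 2 + ((k : ℝ) + 1)⁻¹) := by
    rw [hsre]; unfold rr; field_simp; ring
  have hdpos : 0 < s.re + 2 + ((k : ℝ) + 1)⁻¹ := by
    have : 0 < ((k : ℝ) + 1)⁻¹ := by positivity
    linarith
  refine ⟨hfub.1, ?_, ?_⟩
  · have h1 : (∫ p in RR k, ((p.1 : ℝ) : ℂ) ^ (-s - 2)) =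
        ∫ x in Ioi (1 : ℝ), (cc k * x ^ rr k) • F x := hfub.2
    rw [h1]
    have heq : Set.EqOn (fun x : ℝ => (cc k * x ^ rr k) • F x)
        (fun x : ℝ => (cc k : ℂ) * (x : ℂ) ^ (((rr k : ℝ) : ℂ) + (-s - 2))) (Ioi 1) := by
      intro x hx
      have h0 : (0 : ℝ) < x := lt_trans one_pos hx
      have hx0 : (x : ℂ) ≠ 0 := Complex.ofReal_ne_zero.2 h0.ne'
      simp only [hF_def]
      rw [Complex.real_smul, Complex.ofReal_mul, Complex.ofReal_cpow h0.le, mul_assoc,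
        ← Complex.cpow_add _ _ hx0]
    rw [setIntegral_congr_fun measurableSet_Ioi heq, integral_const_mul]
    have hre : (((rr k : ℝ) : ℂ) + (-s - 2)).re < -1 := by
      have : (((rr k : ℝ) : ℂ) + (-s - 2)).re = rr k + (-s - 2).re := by simp
      rw [this]; have := rr_lt k; linarith
    rw [integral_Ioi_cpow_of_lt hre one_pos, Complex.ofReal_one, Complex.one_cpow]
    have hD : ((rr k : ℝ) : ℂ) + (-s - 2) + 1 = -(s + 2 + ((k : ℂ) + 1)⁻¹) := by
      unfold rr
      push_cast
      have : ((k : ℂ) + 1) ≠ 0 := by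
        intro h
        have := congrArg Complex.re h
        push_cast at this
        simp at this
        linarith [Nat.cast_nonneg (α := ℝ) k]
      field_simp
      ring
    rw [hD, neg_div_neg_eq]
    have hcck : (cc k : ℂ) = ((2 : ℂ) ^ (k + 1))⁻¹ / ((k : ℂ) + 1) := by
      unfold cc; push_cast; ring
    rw [hcck, div_mul_div_comm, mul_one]
  · have hInt' : IntegrableOn
        (fun x => ‖(fun x : ℝ => ‖F x‖) x‖ * (cc k * x ^ rr k)) (Ioi 1) := by
      simpa [norm_norm] using hInt
    have hfub' := fubini_region (S18 k) (cc k) (rr k) (cc_pos k).le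
      (fun x => ‖F x‖) hFm.norm hInt'
    have h2 : (∫ p in RR k, ‖((p.1 : ℝ) : ℂ) ^ (-s - 2)‖) =
        ∫ x in Ioi (1 : ℝ), (cc k * x ^ rr k) • ‖F x‖ := hfub'.2
    rw [h2]
    have heq : Set.EqOn (fun x : ℝ => (cc k * x ^ rr k) • ‖F x‖)
        (fun x : ℝ => cc k * x ^ (rr k + (-s - 2).re)) (Ioi 1) := by
      intro x hx
      have h0 : (0 : ℝ) < x := lt_trans one_pos hx
      simp only [smul_eq_mul]
      rw [hnormF x hx, Real.rpow_add h0]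
      ring
    rw [setIntegral_congr_fun measurableSet_Ioi heq, integral_const_mul,
      integral_Ioi_rpow_of_lt hexp one_pos, Real.one_rpow, hedenom]
    rw [show -(1 : ℝ) / -(s.re + 2 + ((k : ℝ) + 1)⁻¹) = (s.re + 2 + ((k : ℝ) + 1)⁻¹)⁻¹ by
      rw [neg_div_neg_eq, one_div]]
    rw [← div_eq_mul_inv]
    apply div_le_div₀ (by positivity)
    · calc cc k ≤ ((2 : ℝ) ^ (k + 1))⁻¹ := by
            unfold cc
            apply div_le_self (by positivity)
            linarith [Nat.cast_nonneg (α := ℝ) k]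
        _ = ((2 : ℝ)⁻¹) ^ (k + 1) := by rw [inv_pow]
    · linarith
    · have : 0 < ((k : ℝ) + 1)⁻¹ := by positivity
      linarith

end Stmt18Aux

set_option maxHeartbeats 1000000 in
/-- The sets `Ω_k` are pairwise disjoint, `|Ω| = 1` for `Ω = ⋃_k Ω_k`, and
for every `s ∈ ℂ` with `Re s > -2`,
`∫_Ω x^{-s-2} d(x,y) = Σ_{k≥1} 2^{-k}/(k(s+2+1/k))`, the series converging absolutely.
(This integral is the Lapidus zeta function of `Ω` at infinity for the sup-norm, `T = 1`.) -/
theorem stmt_18 :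
    (∀ k l : ℕ, k ≠ l → Disjoint (O18 k) (O18 l)) ∧
    volume (⋃ k : ℕ, O18 k) = 1 ∧
    ∀ s : ℂ, -2 < s.re →
      Summable (fun k : ℕ =>
        ((2 : ℂ) ^ (k + 1))⁻¹ / (((k : ℂ) + 1) * (s + 2 + ((k : ℂ) + 1)⁻¹))) ∧
      ∫ p in ⋃ k : ℕ, O18 k, ((p 0 : ℝ) : ℂ) ^ (-s - 2) =
        ∑' k : ℕ,
          ((2 : ℂ) ^ (k + 1))⁻¹ / (((k : ℂ) + 1) * (s + 2 + ((k : ℂ) + 1)⁻¹)) := by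
  have hpair : Pairwise (Function.onFun Disjoint O18) := fun {k l} h => Stmt18Aux.disj k l h
  refine ⟨Stmt18Aux.disj, ?_, ?_⟩
  · rw [measure_iUnion hpair Stmt18Aux.measurableSet_O18, tsum_congr Stmt18Aux.volume_O18]
    exact Stmt18Aux.tsum_halves
  · intro s hs
    have hF'm : Measurable (fun p : EuclideanSpace ℝ (Fin 2) =>
        ((p 0 : ℝ) : ℂ) ^ (-s - 2)) := by measurability
    have hIk : ∀ k : ℕ, IntegrableOn (fun p : ℝ × ℝ => ((p.1 : ℝ) : ℂ) ^ (-s - 2))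
        (Stmt18Aux.RR k) := fun k => (Stmt18Aux.key_int s hs k).1
    have hlint : ∀ k : ℕ, (∫⁻ p in O18 k, ‖((p 0 : ℝ) : ℂ) ^ (-s - 2)‖₊) ≤
        ENNReal.ofReal (((2 : ℝ)⁻¹) ^ (k + 1) / (s.re + 2)) := by
      intro k
      rw [Stmt18Aux.O18_eq]
      have hmeasg : Measurable
          (fun z : ℝ × ℝ => (‖((z.1 : ℝ) : ℂ) ^ (-s - 2)‖₊ : ℝ≥0∞)) := by
        measurability
      have htrans := (Stmt18Aux.φ_mp.restrict_preimage
        (Stmt18Aux.measurableSet_RR k)).lintegral_comp hmeasg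
      rw [show (∫⁻ p in Stmt18Aux.φ ⁻¹' Stmt18Aux.RR k, ‖((p 0 : ℝ) : ℂ) ^ (-s - 2)‖₊) =
          ∫⁻ z in Stmt18Aux.RR k, ‖((z.1 : ℝ) : ℂ) ^ (-s - 2)‖₊ from htrans]
      erw [← ofReal_integral_norm_eq_lintegral_enorm (hIk k)]
      exact ENNReal.ofReal_le_ofReal (Stmt18Aux.key_int s hs k).2.2
    have hIntU : IntegrableOn (fun p : EuclideanSpace ℝ (Fin 2) =>
        ((p 0 : ℝ) : ℂ) ^ (-s - 2)) (⋃ k, O18 k) := by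
      refine ⟨hF'm.aestronglyMeasurable.restrict, ?_⟩
      have hb : (∫⁻ p in ⋃ k, O18 k, ‖((p 0 : ℝ) : ℂ) ^ (-s - 2)‖₊) ≤
          ∑' k : ℕ, ENNReal.ofReal (((2 : ℝ)⁻¹) ^ (k + 1) / (s.re + 2)) :=
        le_trans (lintegral_iUnion_le _ _) (ENNReal.tsum_le_tsum hlint)
      have hfin : (∑' k : ℕ, ENNReal.ofReal (((2 : ℝ)⁻¹) ^ (k + 1) / (s.re + 2))) < ⊤ := by
        have h1 : ∀ k : ℕ, ENNReal.ofReal (((2 : ℝ)⁻¹) ^ (k + 1) / (s.re + 2)) =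
            ENNReal.ofReal ((2 : ℝ) ^ (k + 1))⁻¹ * (ENNReal.ofReal (s.re + 2))⁻¹ := by
          intro k
          rw [ENNReal.ofReal_div_of_pos (by linarith), inv_pow, div_eq_mul_inv]
        rw [tsum_congr h1, ENNReal.tsum_mul_right, Stmt18Aux.tsum_halves, one_mul]
        exact ENNReal.inv_lt_top.2 (ENNReal.ofReal_pos.2 (by linarith))
      exact lt_of_le_of_lt hb hfin
    have hsum : HasSum (fun k : ℕ => ∫ p in O18 k, ((p 0 : ℝ) : ℂ) ^ (-s - 2))
        (∫ p in ⋃ k : ℕ, O18 k, ((p 0 : ℝ) : ℂ) ^ (-s - 2)) :=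
      hasSum_integral_iUnion Stmt18Aux.measurableSet_O18 hpair hIntU
    have hterm : ∀ k : ℕ, (∫ p in O18 k, ((p 0 : ℝ) : ℂ) ^ (-s - 2)) =
        ((2 : ℂ) ^ (k + 1))⁻¹ / (((k : ℂ) + 1) * (s + 2 + ((k : ℂ) + 1)⁻¹)) := by
      intro k
      rw [Stmt18Aux.O18_eq]
      have h := Stmt18Aux.φ_mp.setIntegral_preimage_emb Stmt18Aux.φ.measurableEmbedding
        (fun z : ℝ × ℝ => ((z.1 : ℝ) : ℂ) ^ (-s - 2)) (Stmt18Aux.RR k)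
      rw [show (∫ p in Stmt18Aux.φ ⁻¹' Stmt18Aux.RR k, ((p 0 : ℝ) : ℂ) ^ (-s - 2)) =
          ∫ z in Stmt18Aux.RR k, ((z.1 : ℝ) : ℂ) ^ (-s - 2) from h]
      exact (Stmt18Aux.key_int s hs k).2.1
    refine ⟨hsum.summable.congr hterm, ?_⟩
    rw [← hsum.tsum_eq]
    exact tsum_congr hterm
end

section
/- Let a ∈ (0,1/2) and b > 1 + log 2 / log(1/a). Let c : ℕ × ℕ → ℝ and, for m ≥ 1 and 0 ≤ j < 2^{m-1}, define P_{m,j} := {(x,y) ∈ ℝ² : x > a^{-m}, c(m,j) < y < c(m,j) + x^{-b}}; assume 0 ≤ c(m,j) and c(m,j) + a^{mb} ≤ 1 for all such m, j (so each P_{m,j} lies in the strip {0 ≤ y ≤ 1}), and that the sets P_{m,j} are pairwise disjoint. Let Ω := ⋃_{m≥1} ⋃_{0≤j<2^{m-1}} P_{m,j}. Then |Ω| < ∞ and for every s ∈ ℂ with Re s > log 2/log(1/a) - (b+1), ∫_Ω x^{-s-2} d(x,y) = 1 / ( (s+b+1)·(a^{-(s+b+1)} - 2) ), where x^{-s-2}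 and a^{-(s+b+1)} denote complex powers of positive reals. (Since 0 < y < 1 < a^{-1} < x on Ω, this integral is the Lapidus zeta function of the Cantor-like set Ω_∞^{(a,b)} at infinity with respect to the sup-norm on ℝ² with T = 1, and log 2/log(1/a) - (b+1) equals the upper box dimension of Ω at infinity.) -/
open MeasureTheory Filter Set
open scoped Topology ENNReal

section Stmt19Aux

/-- The measurable equivalence between the Euclidean plane and `ℝ × ℝ`. -/
noncomputable def stmt19E : EuclideanSpace ℝ (Fin 2) ≃ᵐ ℝ × ℝ :=
  (MeasurableEquiv.toLp 2 (Fin 2 → ℝ)).symm.trans (MeasurableEquiv.piFinTwo fun _ => ℝ)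

lemma stmt19E_measurePreserving : MeasurePreserving stmt19E volume volume :=
  (volume_preserving_piFinTwo fun _ => ℝ).comp
    (EuclideanSpace.volume_preserving_symm_measurableEquiv_toLp (Fin 2))

end Stmt19Aux

/-- The basic region between graphs. -/
def stmt19Reg (A cc b : ℝ) : Set (ℝ × ℝ) :=
  {z : ℝ × ℝ | A < z.1 ∧ cc < z.2 ∧ z.2 < cc + z.1 ^ (-b)}

lemma stmt19Reg_measurableSet (A cc b : ℝ) : MeasurableSet (stmt19Reg A cc b) := by
  apply MeasurableSet.inter
  · exact measurable_fst measurableSet_Ioi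
  apply MeasurableSet.inter
  · exact measurable_snd measurableSet_Ioi
  · exact measurableSet_lt measurable_snd
      (measurable_const.add ((measurable_fst).pow measurable_const))

lemma stmt19Reg_slice (A cc b : ℝ) (x : ℝ) :
    Prod.mk x ⁻¹' stmt19Reg A cc b = if A < x then Ioo cc (cc + x ^ (-b)) else ∅ := by
  by_cases h : A < x <;> ext y <;> simp [stmt19Reg, h]

/-- Tonelli for the region with an integrand depending only on the first coordinate. -/
lemma stmt19Reg_lintegral (A cc b : ℝ) (f : ℝ → ℝ≥0∞) (hf : Measurable f) :
    ∫⁻ z in stmt19Reg A cc b, f z.1 = ∫⁻ x in Ioi A, f x * ENNReal.ofReal (x ^ (-b)) := by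
  have hS := stmt19Reg_measurableSet A cc b
  rw [← lintegral_indicator hS, ← lintegral_indicator measurableSet_Ioi]
  rw [show (volume : Measure (ℝ × ℝ)) = (volume : Measure ℝ).prod volume from rfl]
  have hm : Measurable fun z : ℝ × ℝ => f z.1 := hf.comp measurable_fst
  rw [lintegral_prod _ ((hm.indicator hS).aemeasurable)]
  congr 1
  funext x
  have : ∀ y, (stmt19Reg A cc b).indicator (fun z : ℝ × ℝ => f z.1) (x, y)
      = (Prod.mk x ⁻¹' stmt19Reg A cc b).indicator (fun _ => f x) y := by
    intro y
    by_cases hy : (x, y) ∈ stmt19Reg A cc b <;> simp [indicator, hy, Set.mem_preimage]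
  simp_rw [this, stmt19Reg_slice]
  by_cases hx : A < x
  · rw [if_pos hx, lintegral_indicator measurableSet_Ioo, indicator_of_mem (show x ∈ Ioi A from hx),
      setLIntegral_const, Real.volume_Ioo]
    ring_nf
  · rw [if_neg hx, indicator_of_notMem (show x ∉ Ioi A from hx)]
    simp

/-- Value of the lintegral of `x ^ t` over the region. -/
lemma stmt19Reg_lintegral_rpow (A cc b t : ℝ) (hA : 0 < A) (ht : t - b < -1) :
    ∫⁻ z in stmt19Reg A cc b, ENNReal.ofReal (z.1 ^ t)
      = ENNReal.ofReal ((b - t - 1)⁻¹ * A ^ (t - b + 1)) := by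
  have hmf : Measurable fun x : ℝ => ENNReal.ofReal (x ^ t) :=
    (measurable_id.pow measurable_const).ennreal_ofReal
  rw [stmt19Reg_lintegral A cc b _ hmf]
  have h1 : ∀ x ∈ Ioi A, ENNReal.ofReal (x ^ t) * ENNReal.ofReal (x ^ (-b))
      = ENNReal.ofReal (x ^ (t - b)) := by
    intro x hx
    have hx0 : (0:ℝ) < x := hA.trans hx
    rw [← ENNReal.ofReal_mul (Real.rpow_nonneg hx0.le t), ← Real.rpow_add hx0]
    ring_nf
  rw [setLIntegral_congr_fun measurableSet_Ioi h1]
  rw [← ofReal_integral_eq_lintegral_ofReal (integrableOn_Ioi_rpow_of_lt ht hA)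
    ((ae_restrict_iff' measurableSet_Ioi).2 (ae_of_all _ fun x hx =>
      Real.rpow_nonneg (le_of_lt (hA.trans hx)) _))]
  rw [integral_Ioi_rpow_of_lt ht hA]
  congr 1
  have h2 : t - b + 1 ≠ 0 := by linarith
  have h3 : b - t - 1 ≠ 0 := by linarith
  field_simp
  ring

/-- Fubini for the Bochner integral of a function of the first coordinate over the region. -/
lemma stmt19Reg_integral (A cc b : ℝ) (hA : 0 < A) (g : ℝ → ℂ)
    (hg : IntegrableOn (fun z : ℝ × ℝ => g z.1) (stmt19Reg A cc b)) :
    ∫ z in stmt19Reg A cc b, g z.1 = ∫ x in Ioi A, (x ^ (-b) : ℝ) • g x := by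
  have hS := stmt19Reg_measurableSet A cc b
  rw [← integral_indicator hS, ← integral_indicator measurableSet_Ioi]
  have hg' : Integrable ((stmt19Reg A cc b).indicator fun z : ℝ × ℝ => g z.1)
      ((volume : Measure ℝ).prod volume) :=
    (integrable_indicator_iff hS).2 hg
  rw [show (volume : Measure (ℝ × ℝ)) = (volume : Measure ℝ).prod volume from rfl]
  rw [MeasureTheory.integral_prod _ hg']
  congr 1
  funext x
  have key : ∀ y, (stmt19Reg A cc b).indicator (fun z : ℝ × ℝ => g z.1) (x, y)
      = (Prod.mk x ⁻¹' stmt19Reg A cc b).indicator (fun _ => g x) y := by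
    intro y
    by_cases hy : (x, y) ∈ stmt19Reg A cc b <;> simp [indicator, hy, Set.mem_preimage]
  simp_rw [key, stmt19Reg_slice]
  by_cases hx : A < x
  · rw [if_pos hx, indicator_of_mem (show x ∈ Ioi A from hx), integral_indicator measurableSet_Ioo,
      setIntegral_const, measureReal_def, Real.volume_Ioo]
    have hx0 : (0:ℝ) < x := hA.trans hx
    rw [show cc + x ^ (-b) - cc = x ^ (-b) by ring, ENNReal.toReal_ofReal (Real.rpow_nonneg hx0.le _)]
  · rw [if_neg hx, indicator_of_notMem (show x ∉ Ioi A from hx)]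
    simp

/-- Summability of the geometric-type series in `ℝ≥0∞`. -/
lemma stmt19_tsum_lt_top (r C : ℝ) (hr0 : 0 ≤ r) (hr : 2 * r < 1) (hC : 0 ≤ C) :
    ∑' m : ℕ, (2 : ℝ≥0∞) ^ m * ENNReal.ofReal (C * r ^ (m + 1)) < ⊤ := by
  have h1 : ∀ m : ℕ, (2 : ℝ≥0∞) ^ m * ENNReal.ofReal (C * r ^ (m + 1))
      = ENNReal.ofReal ((C * r) * (2 * r) ^ m) := by
    intro m
    rw [show ((2 : ℝ≥0∞) ^ m) = ENNReal.ofReal ((2:ℝ) ^ m) by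
      rw [ENNReal.ofReal_pow (by norm_num)]; norm_num]
    rw [← ENNReal.ofReal_mul (by positivity)]
    congr 1
    ring
  simp_rw [h1]
  rw [← ENNReal.ofReal_tsum_of_nonneg (fun m => by positivity)
    (((summable_geometric_of_lt_one (by linarith) hr)).mul_left _)]
  exact ENNReal.ofReal_lt_top

lemma stmt19_rpow_cpow (a : ℝ) (ha0 : 0 < a) (m : ℕ) (u : ℂ) :
    ((a ^ (-((m : ℝ) + 1)) : ℝ) : ℂ) ^ (-u) = (((a : ℝ) : ℂ) ^ u) ^ (m + 1) := by
  have hbase : ((a ^ (-((m : ℝ) + 1)) : ℝ) : ℂ) ≠ 0 :=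
    Complex.ofReal_ne_zero.mpr (Real.rpow_pos_of_pos ha0 _).ne'
  have ha' : ((a : ℝ) : ℂ) ≠ 0 := Complex.ofReal_ne_zero.mpr ha0.ne'
  rw [Complex.cpow_def_of_ne_zero hbase, Complex.cpow_def_of_ne_zero ha']
  rw [← Complex.ofReal_log (Real.rpow_pos_of_pos ha0 _).le, Real.log_rpow ha0,
    ← Complex.ofReal_log ha0.le, ← Complex.exp_nat_mul]
  congr 1
  push_cast
  ring

lemma stmt19_measurable_cpow (w : ℂ) : Measurable fun x : ℝ => ((x : ℝ) : ℂ) ^ w :=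
  Complex.measurable_ofReal.pow measurable_const

lemma stmt19_rpow_eq_half (a : ℝ) (ha0 : 0 < a) (ha1 : a < 1) :
    a ^ (Real.log 2 / Real.log (1 / a)) = 1 / 2 := by
  have hla : Real.log a < 0 := Real.log_neg ha0 ha1
  rw [Real.rpow_def_of_pos ha0, one_div, Real.log_inv]
  rw [show Real.log a * (Real.log 2 / -Real.log a) = -Real.log 2 by
    rw [div_neg, mul_neg, mul_div_assoc', mul_comm, mul_div_assoc, div_self hla.ne, mul_one]]
  rw [Real.exp_neg, Real.exp_log two_pos]
  norm_num

lemma stmt19_piece (a b : ℝ) (ha0 : 0 < a) (m : ℕ) (cc : ℝ) (s : ℂ)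
    (hre : -1 - b < s.re)
    (hg : IntegrableOn (fun z : ℝ × ℝ => ((z.1 : ℝ) : ℂ) ^ (-s - 2))
      (stmt19Reg (a ^ (-((m : ℝ) + 1))) cc b)) :
    ∫ z in stmt19Reg (a ^ (-((m : ℝ) + 1))) cc b, ((z.1 : ℝ) : ℂ) ^ (-s - 2)
      = (((a : ℝ) : ℂ) ^ (s + (b : ℂ) + 1)) ^ (m + 1) / (s + (b : ℂ) + 1) := by
  have hA : 0 < a ^ (-((m : ℝ) + 1)) := Real.rpow_pos_of_pos ha0 _
  rw [stmt19Reg_integral _ cc b hA (fun x : ℝ => ((x : ℝ) : ℂ) ^ (-s - 2)) hg]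
  have hcongr : EqOn (fun x : ℝ => (x ^ (-b) : ℝ) • ((x : ℂ) ^ (-s - 2)))
      (fun x : ℝ => (x : ℂ) ^ (-s - 2 - (b : ℂ))) (Ioi (a ^ (-((m : ℝ) + 1)))) := by
    intro x hx
    have hx0 : (0:ℝ) < x := hA.trans hx
    have hx0' : ((x : ℝ) : ℂ) ≠ 0 := Complex.ofReal_ne_zero.mpr hx0.ne'
    simp only
    rw [Complex.real_smul, Complex.ofReal_cpow hx0.le,
      show ((-b : ℝ) : ℂ) = -(b : ℂ) by push_cast; ring,
      ← Complex.cpow_add _ _ hx0']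
    congr 1
    ring
  rw [setIntegral_congr_fun measurableSet_Ioi hcongr]
  have hw : (-s - 2 - (b : ℂ)).re < -1 := by
    simp only [Complex.sub_re, Complex.neg_re, Complex.ofReal_re]
    norm_num
    linarith
  rw [integral_Ioi_cpow_of_lt hw hA]
  rw [show -s - 2 - (b : ℂ) + 1 = -(s + (b : ℂ) + 1) by ring]
  rw [← stmt19_rpow_cpow a ha0 m (s + (b : ℂ) + 1)]
  rw [div_neg, neg_div, neg_neg]


/-- The indexed family of regions (empty outside the allowed index range). -/
noncomputable def stmt19Q (a b : ℝ) (c : ℕ → ℕ → ℝ) : ℕ × ℕ → Set (ℝ × ℝ) :=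
  fun q => if q.2 < 2 ^ q.1 then stmt19Reg (a ^ (-((q.1 : ℝ) + 1))) (c q.1 q.2) b else ∅

lemma stmt19Q_measurableSet (a b : ℝ) (c : ℕ → ℕ → ℝ) (q : ℕ × ℕ) :
    MeasurableSet (stmt19Q a b c q) := by
  unfold stmt19Q
  split
  · exact stmt19Reg_measurableSet _ _ _
  · exact MeasurableSet.empty

lemma stmt19_rpow_neg_pow (a : ℝ) (ha0 : 0 < a) (m : ℕ) (e : ℝ) :
    (a ^ (-((m : ℝ) + 1))) ^ (-e) = (a ^ e) ^ (m + 1) := by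
  rw [← Real.rpow_natCast (a ^ e) (m + 1), ← Real.rpow_mul ha0.le, ← Real.rpow_mul ha0.le]
  congr 1
  push_cast
  ring

/-- Let `a ∈ (0,1/2)`, `b > 1 + log 2/log(1/a)`, and for `m ≥ 1`,
`0 ≤ j < 2^{m-1}` let `P_{m,j} = {(x,y) : x > a^{-m}, c(m,j) < y < c(m,j) + x^{-b}}` with
`0 ≤ c(m,j)`, `c(m,j) + a^{mb} ≤ 1`, the `P_{m,j}` pairwise disjoint, and
`Ω = ⋃ P_{m,j}` (the Cantor-like set `Ω_∞^{(a,b)}`). Then `|Ω| < ∞` and for every `s ∈ ℂ`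
with `Re s > log 2/log(1/a) - (b+1)`,
`∫_Ω x^{-s-2} d(x,y) = 1/((s+b+1)·(a^{-(s+b+1)} - 2))`.
(Here the index `m : ℕ` corresponds to the paper's `m+1`, so `j` ranges over `j < 2^m`.) -/
theorem stmt_19 (a b : ℝ) (ha0 : 0 < a) (ha : a < 1 / 2)
    (hb : 1 + Real.log 2 / Real.log (1 / a) < b)
    (c : ℕ → ℕ → ℝ)
    (P : ℕ → ℕ → Set (EuclideanSpace ℝ (Fin 2)))
    (hP : ∀ m j : ℕ, P m j =
      {p : EuclideanSpace ℝ (Fin 2) |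
        a ^ (-((m : ℝ) + 1)) < p 0 ∧ c m j < p 1 ∧ p 1 < c m j + (p 0) ^ (-b)})
    (hc0 : ∀ m j : ℕ, j < 2 ^ m → 0 ≤ c m j)
    (hc1 : ∀ m j : ℕ, j < 2 ^ m → c m j + a ^ (((m : ℝ) + 1) * b) ≤ 1)
    (hdisj : ∀ m j m' j' : ℕ, j < 2 ^ m → j' < 2 ^ m' → (m, j) ≠ (m', j') →
      Disjoint (P m j) (P m' j'))
    (Ω : Set (EuclideanSpace ℝ (Fin 2)))
    (hΩ : Ω = ⋃ m : ℕ, ⋃ j : ℕ, ⋃ (_ : j < 2 ^ m), P m j) :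
    volume Ω < ⊤ ∧
    ∀ s : ℂ, Real.log 2 / Real.log (1 / a) - (b + 1) < s.re →
      ∫ p in Ω, ((p 0 : ℝ) : ℂ) ^ (-s - 2) =
        1 / ((s + (b : ℂ) + 1) * (((a : ℝ) : ℂ) ^ (-(s + (b : ℂ) + 1)) - 2)) := by
  have ha1 : a < 1 := by linarith
  have hd0 : 0 < Real.log 2 / Real.log (1 / a) :=
    div_pos (Real.log_pos one_lt_two) (Real.log_pos (one_lt_one_div ha0 ha1))
  have hhalf : ∀ e : ℝ, Real.log 2 / Real.log (1 / a) < e → a ^ e < 1 / 2 := fun e he =>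
    (Real.rpow_lt_rpow_of_exponent_gt ha0 ha1 he).trans_le
      (le_of_eq (stmt19_rpow_eq_half a ha0 ha1))
  have hb1 : (1 : ℝ) < b := by linarith
  have hA : ∀ m : ℕ, (0:ℝ) < a ^ (-((m : ℝ) + 1)) := fun m => Real.rpow_pos_of_pos ha0 _
  have hQm : ∀ q : ℕ × ℕ, MeasurableSet (stmt19Q a b c q) := stmt19Q_measurableSet a b c
  have hPQ : ∀ m j : ℕ, j < 2 ^ m → P m j = stmt19E ⁻¹' stmt19Q a b c (m, j) := by
    intro m j hj
    rw [hP]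
    unfold stmt19Q
    rw [if_pos hj]
    rfl
  have hΩE : Ω = stmt19E ⁻¹' (⋃ q : ℕ × ℕ, stmt19Q a b c q) := by
    rw [hΩ, Set.preimage_iUnion]
    ext p
    simp only [mem_iUnion]
    constructor
    · rintro ⟨m, j, hj, hp⟩
      exact ⟨(m, j), by rw [← hPQ m j hj]; exact hp⟩
    · rintro ⟨⟨m, j⟩, hp⟩
      by_cases hj : j < 2 ^ m
      · exact ⟨m, j, hj, by rw [hPQ m j hj]; exact hp⟩
      · rw [Set.mem_preimage] at hp
        unfold stmt19Q at hp
        rw [if_neg hj] at hp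
        exact absurd hp (Set.notMem_empty _)
  have hQdisj : Pairwise (Function.onFun Disjoint (stmt19Q a b c)) := by
    rintro ⟨m, j⟩ ⟨m', j'⟩ hne
    unfold Function.onFun stmt19Q
    split_ifs with h1 h2 h2
    · have hd' := hdisj m j m' j' h1 h2 (by simpa using hne)
      rw [hPQ m j h1, hPQ m' j' h2] at hd'
      rw [Set.disjoint_iff_inter_eq_empty] at hd' ⊢
      rw [← Set.preimage_inter, Set.preimage_eq_empty_iff,
        stmt19E.surjective.range_eq, Set.disjoint_univ] at hd'
      · simpa [stmt19Q, h1, h2] using hd'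
    all_goals simp
  -- the volume of each region
  have hvol : ∀ m j : ℕ, volume (stmt19Reg (a ^ (-((m : ℝ) + 1))) (c m j) b)
      = ENNReal.ofReal ((b - 1)⁻¹ * (a ^ (b - 1)) ^ (m + 1)) := by
    intro m j
    have h0 : volume (stmt19Reg (a ^ (-((m : ℝ) + 1))) (c m j) b)
        = ∫⁻ z in stmt19Reg (a ^ (-((m : ℝ) + 1))) (c m j) b, ENNReal.ofReal (z.1 ^ (0:ℝ)) := by
      rw [← setLIntegral_one]
      exact (setLIntegral_congr_fun (stmt19Reg_measurableSet _ _ _)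
        (fun z hz => by simp)).symm
    rw [h0, stmt19Reg_lintegral_rpow _ _ _ _ (hA m) (by linarith)]
    rw [show (0:ℝ) - b + 1 = -(b - 1) by ring, stmt19_rpow_neg_pow a ha0 m (b - 1)]
    norm_num
  constructor
  · -- finiteness of the volume
    rw [hΩE, stmt19E_measurePreserving.measure_preimage
      (MeasurableSet.iUnion hQm).nullMeasurableSet, measure_iUnion hQdisj hQm,
      ENNReal.tsum_prod']
    have hsum : ∀ m : ℕ, ∑' j : ℕ, volume (stmt19Q a b c (m, j))
        = (2:ℝ≥0∞) ^ m * ENNReal.ofReal ((b - 1)⁻¹ * (a ^ (b - 1)) ^ (m + 1)) := by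
      intro m
      have h0 : ∀ j ∉ Finset.range (2 ^ m), volume (stmt19Q a b c (m, j)) = 0 := by
        intro j hj
        have he : stmt19Q a b c (m, j) = ∅ := if_neg (by simpa using hj)
        rw [he]
        exact measure_empty
      have h1 : ∀ j ∈ Finset.range (2 ^ m), volume (stmt19Q a b c (m, j))
          = ENNReal.ofReal ((b - 1)⁻¹ * (a ^ (b - 1)) ^ (m + 1)) := by
        intro j hj
        have he : stmt19Q a b c (m, j) = stmt19Reg (a ^ (-((m : ℝ) + 1))) (c m j) b :=
          if_pos (Finset.mem_range.mp hj)
        rw [he]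
        exact hvol m j
      rw [tsum_eq_sum h0, Finset.sum_congr rfl h1, Finset.sum_const, Finset.card_range,
        nsmul_eq_mul]
      congr 1
      push_cast
      rfl
    simp_rw [hsum]
    exact stmt19_tsum_lt_top (a ^ (b - 1)) (b - 1)⁻¹
      (Real.rpow_nonneg ha0.le _)
      (by have := hhalf (b - 1) (by linarith); linarith)
      (inv_nonneg.mpr (by linarith))
  · intro s hs
    have he2 : Real.log 2 / Real.log (1 / a) < s.re + b + 1 := by linarith
    have hre : -1 - b < s.re := by linarith
    have hgmeas : Measurable fun z : ℝ × ℝ => ((z.1 : ℝ) : ℂ) ^ (-s - 2) :=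
      (stmt19_measurable_cpow (-s - 2)).comp measurable_fst
    have hnorm : ∀ m j : ℕ, ∫⁻ z in stmt19Reg (a ^ (-((m : ℝ) + 1))) (c m j) b,
        (‖((z.1 : ℝ) : ℂ) ^ (-s - 2)‖₊ : ℝ≥0∞)
        = ENNReal.ofReal ((s.re + b + 1)⁻¹ * (a ^ (s.re + b + 1)) ^ (m + 1)) := by
      intro m j
      have hcongr : ∀ z ∈ stmt19Reg (a ^ (-((m : ℝ) + 1))) (c m j) b,
          (‖((z.1 : ℝ) : ℂ) ^ (-s - 2)‖₊ : ℝ≥0∞) = ENNReal.ofReal (z.1 ^ (-s.re - 2)) := by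
        intro z hz
        have hz0 : (0:ℝ) < z.1 := (hA m).trans hz.1
        rw [show ((‖((z.1 : ℝ) : ℂ) ^ (-s - 2)‖₊ : ℝ≥0∞)) = ENNReal.ofReal ‖((z.1 : ℝ) : ℂ) ^ (-s - 2)‖ from (ENNReal.ofReal_eq_coe_nnreal (norm_nonneg _)).symm]
        congr 1
        rw [Complex.norm_cpow_eq_rpow_re_of_pos hz0,
          show (-s - 2).re = -s.re - 2 by simp]
      rw [setLIntegral_congr_fun (stmt19Reg_measurableSet _ _ _) hcongr]
      rw [stmt19Reg_lintegral_rpow _ _ _ _ (hA m) (by linarith)]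
      rw [show b - (-s.re - 2) - 1 = s.re + b + 1 by ring,
        show -s.re - 2 - b + 1 = -(s.re + b + 1) by ring, stmt19_rpow_neg_pow a ha0 m _]
    have hint : IntegrableOn (fun z : ℝ × ℝ => ((z.1 : ℝ) : ℂ) ^ (-s - 2))
        (⋃ q : ℕ × ℕ, stmt19Q a b c q) := by
      refine ⟨hgmeas.aestronglyMeasurable.restrict, ?_⟩
      show (∫⁻ z in ⋃ q : ℕ × ℕ, stmt19Q a b c q, (‖((z.1 : ℝ) : ℂ) ^ (-s - 2)‖₊ : ℝ≥0∞)) < ⊤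
      rw [lintegral_iUnion hQm hQdisj, ENNReal.tsum_prod']
      have hsum : ∀ m : ℕ, ∑' j : ℕ, ∫⁻ z in stmt19Q a b c (m, j),
          (‖((z.1 : ℝ) : ℂ) ^ (-s - 2)‖₊ : ℝ≥0∞)
          = (2:ℝ≥0∞) ^ m * ENNReal.ofReal ((s.re + b + 1)⁻¹ * (a ^ (s.re + b + 1)) ^ (m + 1)) := by
        intro m
        have h0 : ∀ j ∉ Finset.range (2 ^ m), (∫⁻ z in stmt19Q a b c (m, j),
            (‖((z.1 : ℝ) : ℂ) ^ (-s - 2)‖₊ : ℝ≥0∞)) = 0 := by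
          intro j hj
          have he : stmt19Q a b c (m, j) = ∅ := if_neg (by simpa using hj)
          rw [he]
          simp
        have h1 : ∀ j ∈ Finset.range (2 ^ m), (∫⁻ z in stmt19Q a b c (m, j),
            (‖((z.1 : ℝ) : ℂ) ^ (-s - 2)‖₊ : ℝ≥0∞))
            = ENNReal.ofReal ((s.re + b + 1)⁻¹ * (a ^ (s.re + b + 1)) ^ (m + 1)) := by
          intro j hj
          have he : stmt19Q a b c (m, j) = stmt19Reg (a ^ (-((m : ℝ) + 1))) (c m j) b :=
            if_pos (Finset.mem_range.mp hj)
          rw [he]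
          exact hnorm m j
        rw [tsum_eq_sum h0, Finset.sum_congr rfl h1, Finset.sum_const, Finset.card_range,
          nsmul_eq_mul]
        congr 1
        push_cast
        rfl
      simp_rw [hsum]
      exact stmt19_tsum_lt_top (a ^ (s.re + b + 1)) (s.re + b + 1)⁻¹
        (Real.rpow_nonneg ha0.le _)
        (by have := hhalf (s.re + b + 1) he2; linarith)
        (inv_nonneg.mpr (by linarith))
    have hpieceInt : ∀ m j : ℕ, j < 2 ^ m →
        IntegrableOn (fun z : ℝ × ℝ => ((z.1 : ℝ) : ℂ) ^ (-s - 2))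
          (stmt19Reg (a ^ (-((m : ℝ) + 1))) (c m j) b) := by
      intro m j hj
      refine hint.mono_set ?_
      intro z hz
      refine Set.mem_iUnion.mpr ⟨(m, j), ?_⟩
      rwa [show stmt19Q a b c (m, j) = stmt19Reg (a ^ (-((m : ℝ) + 1))) (c m j) b
        from if_pos hj]
    have hpiece : ∀ m j : ℕ, j < 2 ^ m →
        ∫ z in stmt19Q a b c (m, j), ((z.1 : ℝ) : ℂ) ^ (-s - 2)
          = (((a : ℝ) : ℂ) ^ (s + (b : ℂ) + 1)) ^ (m + 1) / (s + (b : ℂ) + 1) := by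
      intro m j hj
      rw [show stmt19Q a b c (m, j) = stmt19Reg (a ^ (-((m : ℝ) + 1))) (c m j) b
        from if_pos hj]
      exact stmt19_piece a b ha0 m (c m j) s hre (hpieceInt m j hj)
    have hEint : ∫ p in Ω, ((p 0 : ℝ) : ℂ) ^ (-s - 2)
        = ∫ z in ⋃ q : ℕ × ℕ, stmt19Q a b c q, ((z.1 : ℝ) : ℂ) ^ (-s - 2) := by
      rw [hΩE]
      exact stmt19E_measurePreserving.setIntegral_preimage_emb
        stmt19E.measurableEmbedding (fun z : ℝ × ℝ => ((z.1 : ℝ) : ℂ) ^ (-s - 2)) _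
    rw [hEint, integral_iUnion hQm hQdisj hint]
    have hsummable : Summable fun q : ℕ × ℕ =>
        ∫ z in stmt19Q a b c q, ((z.1 : ℝ) : ℂ) ^ (-s - 2) :=
      (hasSum_integral_iUnion hQm hQdisj hint).summable
    rw [Summable.tsum_prod' hsummable (fun m => summable_of_ne_finset_zero
      (s := Finset.range (2 ^ m)) (fun j hj => by
        have he : stmt19Q a b c (m, j) = ∅ := if_neg (by simpa using hj)
        rw [he]
        simp))]
    have hinner : ∀ m : ℕ, ∑' j : ℕ, ∫ z in stmt19Q a b c (m, j), ((z.1 : ℝ) : ℂ) ^ (-s - 2)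
        = (((a : ℝ) : ℂ) ^ (s + (b : ℂ) + 1) / (s + (b : ℂ) + 1))
            * (2 * ((a : ℝ) : ℂ) ^ (s + (b : ℂ) + 1)) ^ m := by
      intro m
      have h0 : ∀ j ∉ Finset.range (2 ^ m),
          (∫ z in stmt19Q a b c (m, j), ((z.1 : ℝ) : ℂ) ^ (-s - 2)) = 0 := by
        intro j hj
        have he : stmt19Q a b c (m, j) = ∅ := if_neg (by simpa using hj)
        rw [he]
        simp
      rw [tsum_eq_sum h0,
        Finset.sum_congr rfl (fun j hj => hpiece m j (Finset.mem_range.mp hj)),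
        Finset.sum_const, Finset.card_range, nsmul_eq_mul]
      push_cast
      ring
    rw [tsum_congr hinner]
    have hure : (s + (b : ℂ) + 1).re = s.re + b + 1 := by simp
    have hwnorm : ‖2 * ((a : ℝ) : ℂ) ^ (s + (b : ℂ) + 1)‖ < 1 := by
      rw [norm_mul,
        Complex.norm_cpow_eq_rpow_re_of_pos ha0, hure]
      have h2 : ‖(2 : ℂ)‖ = 2 := by norm_num
      rw [h2]
      have := hhalf (s.re + b + 1) he2
      linarith
    rw [tsum_mul_left, tsum_geometric_of_norm_lt_one hwnorm]
    have hw0 : ((a : ℝ) : ℂ) ^ (s + (b : ℂ) + 1) ≠ 0 := by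
      intro h
      rw [Complex.cpow_eq_zero_iff] at h
      exact Complex.ofReal_ne_zero.mpr ha0.ne' h.1
    have hu0 : s + (b : ℂ) + 1 ≠ 0 := by
      intro h
      rw [Complex.ext_iff] at h
      have := h.1
      rw [hure] at this
      simp at this
      linarith
    have h1w : (1 : ℂ) - 2 * ((a : ℝ) : ℂ) ^ (s + (b : ℂ) + 1) ≠ 0 := by
      intro h
      rw [sub_eq_zero] at h
      have : ‖(1 : ℂ)‖ = ‖2 * ((a : ℝ) : ℂ) ^ (s + (b : ℂ) + 1)‖ := by rw [← h]
      rw [norm_one] at this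
      linarith
    rw [Complex.cpow_neg]
    have hden : (((a : ℝ) : ℂ) ^ (s + (b : ℂ) + 1))⁻¹ - 2
        = (1 - 2 * ((a : ℝ) : ℂ) ^ (s + (b : ℂ) + 1))
            * (((a : ℝ) : ℂ) ^ (s + (b : ℂ) + 1))⁻¹ := by
      field_simp
    rw [hden, one_div, mul_inv, mul_inv, inv_inv]
    ring
end
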